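/- arXiv:1406.0390 — 4 statements merged into one kernel-verified Lean document; each statement's English description precedes it below -/
import Mathlib

section
/- There exists a constant C > 0 such that for every α ∈ (0, 1/2] and every u ∈ H¹(ℝ), the Slobodetski H^{1/2} seminorm satisfies |u|²_{H^{1/2}} ≤ C ( ‖u‖²_{L²} + |log α| · |u|²_{H^{1/2}_w} + α ∫ |u̇|² ). -/
open MeasureTheory

open Set

section AuxLemmas

private lemma aux_neg (φ : ℝ → ENNReal) : ∫⁻ h : ℝ, φ (-h) = ∫⁻ h : ℝ, φ h := by
  have := lintegral_map_equiv (μ := (volume : Measure ℝ)) φ (MeasurableEquiv.neg ℝ)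
  rw [show ⇑(MeasurableEquiv.neg ℝ) = (Neg.neg : ℝ → ℝ) from rfl,
    Measure.map_neg_eq_self] at this
  exact this.symm

private lemma aux_CS (μ : Measure ℝ) (f : ℝ → ENNReal) (hf : AEMeasurable f μ) :
    (∫⁻ x, f x ∂μ) ^ 2 ≤ (∫⁻ x, f x ^ 2 ∂μ) * μ Set.univ := by
  have hpq : (2:ℝ).HolderConjugate 2 := by constructor <;> norm_num
  have h := ENNReal.lintegral_mul_le_Lp_mul_Lq μ hpq hf aemeasurable_const (g := fun _ => 1)
  simp only [mul_one, ENNReal.one_rpow, lintegral_const, one_mul, Pi.mul_apply] at h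
  have hsq : ∀ a b : ENNReal, (a ^ ((1:ℝ)/2) * b ^ ((1:ℝ)/2)) ^ 2 = a * b := by
    intro a b
    rw [mul_pow, ← ENNReal.rpow_natCast (a ^ ((1:ℝ)/2)) 2, ← ENNReal.rpow_natCast (b ^ ((1:ℝ)/2)) 2,
      ← ENNReal.rpow_mul, ← ENNReal.rpow_mul]
    norm_num
  calc (∫⁻ x, f x ∂μ) ^ 2
      ≤ ((∫⁻ x, f x ^ (2:ℝ) ∂μ) ^ ((1:ℝ)/2) * (μ univ) ^ ((1:ℝ)/2)) ^ 2 := by gcongr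
    _ = (∫⁻ x, f x ^ (2:ℝ) ∂μ) * μ univ := hsq _ _
    _ = (∫⁻ x, f x ^ 2 ∂μ) * μ univ := by
        congr 1; refine lintegral_congr fun x => ?_
        rw [← ENNReal.rpow_natCast (f x) 2]; norm_num

private lemma aux_fubini (h : ℝ) (g : ℝ → ENNReal) (hg : Measurable g) :
    ∫⁻ x : ℝ, ∫⁻ t in Ioc (x - h) x, g t = ENNReal.ofReal h * ∫⁻ t, g t := by
  have hS : MeasurableSet {p : ℝ × ℝ | p.1 - h < p.2 ∧ p.2 ≤ p.1} := by
    exact (measurableSet_lt (measurable_fst.sub measurable_const) measurable_snd).inter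
      (measurableSet_le measurable_snd measurable_fst)
  set F : ℝ → ℝ → ENNReal :=
    fun x t => ({p : ℝ × ℝ | p.1 - h < p.2 ∧ p.2 ≤ p.1}).indicator (fun p => g p.2) (x, t) with hF
  have hFm : AEMeasurable (Function.uncurry F) ((volume : Measure ℝ).prod volume) := by
    refine Measurable.aemeasurable ?_
    exact ((hg.comp measurable_snd).indicator hS)
  have hFeq : ∀ x t : ℝ, F x t = (Ioc (x - h) x).indicator g t := by
    intro x t
    simp [hF, Set.indicator_apply, Set.mem_Ioc, Set.mem_setOf_eq]
  calc ∫⁻ x : ℝ, ∫⁻ t in Ioc (x - h) x, g t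
      = ∫⁻ x : ℝ, ∫⁻ t, F x t := by
        refine lintegral_congr fun x => ?_
        rw [← lintegral_indicator measurableSet_Ioc]
        exact lintegral_congr fun t => (hFeq x t).symm
    _ = ∫⁻ t, ∫⁻ x, F x t := lintegral_lintegral_swap hFm
    _ = ∫⁻ t, g t * ENNReal.ofReal h := by
        refine lintegral_congr fun t => ?_
        have : ∀ x : ℝ, F x t = (Ico t (t + h)).indicator (fun _ => g t) x := by
          intro x
          simp only [hF, Set.indicator_apply, Set.mem_setOf_eq, Set.mem_Ico]
          congr 1
          simp only [eq_iff_iff]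
          constructor
          · rintro ⟨h1, h2⟩; exact ⟨h2, by linarith⟩
          · rintro ⟨h1, h2⟩; exact ⟨by linarith, h1⟩
        simp_rw [this]
        rw [lintegral_indicator_const measurableSet_Ico, Real.volume_Ico]
        congr 1
        ring_nf
    _ = ENNReal.ofReal h * ∫⁻ t, g t := by
        rw [lintegral_mul_const'' _ hg.aemeasurable, mul_comm]

private lemma aux_D_symm (u : ℝ → ℝ) (h : ℝ) :
    (∫⁻ x : ℝ, ENNReal.ofReal ((u x - u (x - h))^2))
    = ∫⁻ x : ℝ, ENNReal.ofReal ((u x - u (x + h))^2) := by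
  have := lintegral_add_right_eq_self (μ := (volume : Measure ℝ))
    (fun x => ENNReal.ofReal ((u x - u (x - h))^2)) h
  rw [← this]
  refine lintegral_congr fun x => ?_
  rw [show x + h - h = x by ring]
  congr 1
  ring

private lemma aux_D_grad (u v : ℝ → ℝ) (hv : Measurable v)
    (hftc : ∀ a b : ℝ, u b - u a = ∫ t in a..b, v t) (hv2 : MemLp v 2 volume) (h : ℝ) :
    (∫⁻ x : ℝ, ENNReal.ofReal ((u x - u (x - h))^2))
      ≤ ENNReal.ofReal (h^2) * ∫⁻ t : ℝ, ENNReal.ofReal ((v t)^2) := by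
  have hg : Measurable (fun t : ℝ => ENNReal.ofReal ((v t)^2)) :=
    (hv.pow_const 2).ennreal_ofReal
  have main : ∀ h : ℝ, 0 ≤ h →
      (∫⁻ x : ℝ, ENNReal.ofReal ((u x - u (x - h))^2))
        ≤ ENNReal.ofReal (h^2) * ∫⁻ t : ℝ, ENNReal.ofReal ((v t)^2) := by
    intro h hh
    have key : ∀ x : ℝ, ENNReal.ofReal ((u x - u (x - h))^2)
        ≤ ENNReal.ofReal h * ∫⁻ t in Ioc (x - h) x, ENNReal.ofReal ((v t)^2) := by
      intro x
      have hA : IntegrableOn v (Ioc (x - h) x) volume := by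
        have hml : MemLp v 2 (volume.restrict (Ioc (x - h) x)) := hv2.restrict _
        haveI : IsFiniteMeasure (volume.restrict (Ioc (x - h) x)) :=
          ⟨by rw [Measure.restrict_apply_univ]; exact measure_Ioc_lt_top⟩
        exact hml.integrable one_le_two
      have h1 : |u x - u (x - h)| ≤ ∫ t in Ioc (x - h) x, |v t| := by
        rw [hftc (x - h) x]
        calc |∫ t in (x-h)..x, v t| ≤ ∫ t in (x-h)..x, |v t| :=
              intervalIntegral.abs_integral_le_integral_abs (by linarith)
          _ = ∫ t in Ioc (x - h) x, |v t| := intervalIntegral.integral_of_le (by linarith)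
      have h2 : (0:ℝ) ≤ ∫ t in Ioc (x - h) x, |v t| :=
        integral_nonneg fun t => abs_nonneg _
      calc ENNReal.ofReal ((u x - u (x - h))^2)
          = (ENNReal.ofReal |u x - u (x - h)|)^2 := by
            rw [← ENNReal.ofReal_pow (abs_nonneg _), sq_abs]
        _ ≤ (ENNReal.ofReal (∫ t in Ioc (x - h) x, |v t|))^2 := by
            gcongr
        _ = (∫⁻ t in Ioc (x - h) x, ENNReal.ofReal |v t|)^2 := by
            rw [ofReal_integral_eq_lintegral_ofReal hA.abs
              (Filter.Eventually.of_forall fun t => abs_nonneg _)]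
        _ ≤ (∫⁻ t in Ioc (x - h) x, (ENNReal.ofReal |v t|)^2) *
              (volume.restrict (Ioc (x - h) x)) Set.univ := by
            exact aux_CS _ _ (hv.abs.ennreal_ofReal.aemeasurable)
        _ = ENNReal.ofReal h * ∫⁻ t in Ioc (x - h) x, ENNReal.ofReal ((v t)^2) := by
            rw [Measure.restrict_apply_univ, Real.volume_Ioc, show x - (x - h) = h by ring,
              mul_comm]
            congr 1
            refine lintegral_congr fun t => ?_
            rw [← ENNReal.ofReal_pow (abs_nonneg _), sq_abs]
    calc (∫⁻ x : ℝ, ENNReal.ofReal ((u x - u (x - h))^2))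
        ≤ ∫⁻ x : ℝ, ENNReal.ofReal h * ∫⁻ t in Ioc (x - h) x, ENNReal.ofReal ((v t)^2) :=
          lintegral_mono key
      _ = ENNReal.ofReal h * ∫⁻ x : ℝ, ∫⁻ t in Ioc (x - h) x, ENNReal.ofReal ((v t)^2) := by
          rw [lintegral_const_mul' _ _ ENNReal.ofReal_ne_top]
      _ = ENNReal.ofReal h * (ENNReal.ofReal h * ∫⁻ t, ENNReal.ofReal ((v t)^2)) := by
          rw [aux_fubini h _ hg]
      _ = ENNReal.ofReal (h^2) * ∫⁻ t : ℝ, ENNReal.ofReal ((v t)^2) := by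
          rw [← mul_assoc, ← ENNReal.ofReal_mul hh, sq]
  rcases le_or_gt 0 h with hh | hh
  · exact main h hh
  · have := main (-h) (by linarith)
    have heq : (∫⁻ x : ℝ, ENNReal.ofReal ((u x - u (x + h))^2))
        = ∫⁻ x : ℝ, ENNReal.ofReal ((u x - u (x - -h))^2) :=
      lintegral_congr fun x => by rw [show x - -h = x + h by ring]
    rw [aux_D_symm u h, heq, show (h:ℝ)^2 = (-h)^2 by ring]
    exact this

private lemma aux_D_L2 (u : ℝ → ℝ) (hu : Continuous u) (h : ℝ) :
    (∫⁻ x : ℝ, ENNReal.ofReal ((u x - u (x - h))^2))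
      ≤ 4 * ∫⁻ t : ℝ, ENNReal.ofReal ((u t)^2) := by
  have hm : Measurable (fun x : ℝ => ENNReal.ofReal (2*(u x)^2)) :=
    ((continuous_const.mul (hu.pow 2)).measurable).ennreal_ofReal
  have key : ∀ x : ℝ, ENNReal.ofReal ((u x - u (x - h))^2)
      ≤ ENNReal.ofReal (2*(u x)^2) + ENNReal.ofReal (2*(u (x - h))^2) := by
    intro x
    rw [← ENNReal.ofReal_add (by positivity) (by positivity)]
    exact ENNReal.ofReal_le_ofReal (by nlinarith [sq_nonneg (u x + u (x - h))])
  have htrans : (∫⁻ x : ℝ, ENNReal.ofReal (2*(u (x - h))^2))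
      = ∫⁻ x : ℝ, ENNReal.ofReal (2*(u x)^2) :=
    lintegral_sub_right_eq_self (fun x => ENNReal.ofReal (2*(u x)^2)) h
  have hdouble : (∫⁻ x : ℝ, ENNReal.ofReal (2*(u x)^2))
      = 2 * ∫⁻ t : ℝ, ENNReal.ofReal ((u t)^2) := by
    rw [← lintegral_const_mul' _ _ (by norm_num : (2:ENNReal) ≠ ⊤)]
    refine lintegral_congr fun x => ?_
    rw [ENNReal.ofReal_mul (by norm_num)]
    norm_num
  calc (∫⁻ x : ℝ, ENNReal.ofReal ((u x - u (x - h))^2))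
      ≤ ∫⁻ x : ℝ, (ENNReal.ofReal (2*(u x)^2) + ENNReal.ofReal (2*(u (x - h))^2)) :=
        lintegral_mono key
    _ = (∫⁻ x : ℝ, ENNReal.ofReal (2*(u x)^2)) + ∫⁻ x : ℝ, ENNReal.ofReal (2*(u (x - h))^2) :=
        lintegral_add_left hm _
    _ = 4 * ∫⁻ t : ℝ, ENNReal.ofReal ((u t)^2) := by
        rw [htrans, hdouble]; ring

private lemma aux_int_inv (α : ℝ) (h0 : 0 < α) (h1 : α ≤ 1) :
    ∫⁻ h in Ioc α 1, ENNReal.ofReal (|h|⁻¹) = ENNReal.ofReal (-Real.log α) := by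
  have hIcc : IntegrableOn (fun h : ℝ => h⁻¹) (Ioc α 1) volume := by
    refine (ContinuousOn.integrableOn_Icc ?_).mono_set Ioc_subset_Icc_self
    exact continuousOn_inv₀.mono fun x hx => by
      simp only [mem_compl_iff, mem_singleton_iff]
      exact ne_of_gt (lt_of_lt_of_le h0 hx.1)
  have hcongr : ∫⁻ h in Ioc α 1, ENNReal.ofReal (|h|⁻¹)
      = ∫⁻ h in Ioc α 1, ENNReal.ofReal (h⁻¹) := by
    refine setLIntegral_congr_fun measurableSet_Ioc (fun h hh => ?_)
    rw [abs_of_pos (lt_trans h0 hh.1)]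
  have hnn : 0 ≤ᵐ[volume.restrict (Ioc α 1)] fun h : ℝ => h⁻¹ :=
    ae_restrict_of_forall_mem measurableSet_Ioc
      fun h hh => le_of_lt (inv_pos.mpr (lt_trans h0 hh.1))
  rw [hcongr, ← ofReal_integral_eq_lintegral_ofReal hIcc hnn]
  congr 1
  rw [← intervalIntegral.integral_of_le h1]
  have := integral_one_div (a := α) (b := 1) (by
    rw [Set.uIcc_of_le h1]
    rintro ⟨hl, hr⟩
    linarith)
  simp only [one_div] at this
  rw [this, Real.log_inv]

private lemma aux_int_invsq : ∫⁻ h in Ioi (1:ℝ), ENNReal.ofReal ((h^2)⁻¹) = 1 := by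
  have hInt : IntegrableOn (fun h : ℝ => h ^ (-2:ℝ)) (Ioi 1) volume :=
    integrableOn_Ioi_rpow_of_lt (by norm_num) one_pos
  have hcongr : ∫⁻ h in Ioi (1:ℝ), ENNReal.ofReal ((h^2)⁻¹)
      = ∫⁻ h in Ioi (1:ℝ), ENNReal.ofReal (h ^ (-2:ℝ)) := by
    refine setLIntegral_congr_fun measurableSet_Ioi (fun h hh => ?_)
    have h0 : (0:ℝ) < h := lt_trans one_pos hh
    rw [Real.rpow_neg h0.le, show ((2:ℝ) : ℝ) = ((2:ℕ):ℝ) by norm_num,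
      Real.rpow_natCast]
  have hnn : 0 ≤ᵐ[volume.restrict (Ioi (1:ℝ))] fun h : ℝ => h ^ (-2:ℝ) :=
    ae_restrict_of_forall_mem measurableSet_Ioi
      fun h hh => Real.rpow_nonneg (le_of_lt (lt_trans one_pos hh)) _
  rw [hcongr, ← ofReal_integral_eq_lintegral_ofReal hInt hnn,
    integral_Ioi_rpow_of_lt (by norm_num) one_pos]
  norm_num

private lemma aux_reflect (s : Set ℝ) (hs : MeasurableSet s) (f : ℝ → ENNReal)
    (hsymm : ∀ x, f (-x) = f x) :
    ∫⁻ h in (fun x : ℝ => -x) ⁻¹' s, f h = ∫⁻ h in s, f h := by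
  rw [← lintegral_indicator hs, ← lintegral_indicator (hs.preimage measurable_neg)]
  rw [← aux_neg (s.indicator f)]
  refine lintegral_congr fun h => ?_
  by_cases hh : -h ∈ s
  · rw [Set.indicator_of_mem hh, Set.indicator_of_mem (Set.mem_preimage.mpr hh), hsymm h]
  · rw [Set.indicator_of_notMem hh, Set.indicator_of_notMem (fun c => hh (Set.mem_preimage.mp c))]

end AuxLemmas

/-- Squared Slobodetski `H^{1/2}` seminorm on `ℝ`. -/
noncomputable def slobHalfSq (u : ℝ → ℝ) : ENNReal :=
  ∫⁻ x : ℝ, ∫⁻ y : ℝ, ENNReal.ofReal ((u x - u y) ^ 2 / |x - y| ^ 2)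

private lemma slob_repr (u : ℝ → ℝ) (hu : Continuous u) :
    slobHalfSq u = ∫⁻ h : ℝ, ∫⁻ x : ℝ, ENNReal.ofReal ((u x - u (x - h))^2 / h^2) := by
  have hm : Measurable (fun p : ℝ × ℝ => ENNReal.ofReal ((u p.1 - u (p.1 - p.2))^2 / p.2^2)) := by
    apply Measurable.ennreal_ofReal
    exact ((((hu.comp continuous_fst).sub
      (hu.comp (continuous_fst.sub continuous_snd))).pow 2).measurable).div
      ((continuous_snd.pow 2).measurable)
  have step1 : ∀ x : ℝ, (∫⁻ y : ℝ, ENNReal.ofReal ((u x - u y) ^ 2 / |x - y| ^ 2))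
      = ∫⁻ h : ℝ, ENNReal.ofReal ((u x - u (x - h))^2 / h^2) := by
    intro x
    have := lintegral_map_equiv (μ := (volume : Measure ℝ))
      (fun y => ENNReal.ofReal ((u x - u y) ^ 2 / |x - y| ^ 2)) (MeasurableEquiv.subLeft x)
    rw [show ⇑(MeasurableEquiv.subLeft x) = (fun h : ℝ => x - h) from rfl,
      Measure.map_sub_left_eq_self volume x] at this
    rw [this]
    refine lintegral_congr fun h => ?_
    simp only
    congr 1
    rw [show x - (x - h) = h by ring, sq_abs]
  simp only [slobHalfSq, step1]
  exact lintegral_lintegral_swap hm.aemeasurable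

/-- **Logarithmic interpolation bound for the `H^{1/2}` seminorm:** there is `C > 0`
such that for every `α ∈ (0,1/2]` and every `u ∈ H¹(ℝ)` (continuous with weak derivative
`u'`, both in `L²`) whose weak `H^{1/2}` seminorm is bounded by `M`
(`‖u − u(· − y)‖²_{L²} ≤ M² |y|` for all `y`), one has
`|u|²_{H^{1/2}} ≤ C ( ‖u‖²_{L²} + |log α| M² + α ∫ |u̇|² )`. -/
theorem slobHalf_le_weakHalf_log :
    ∃ C > (0 : ℝ), ∀ α : ℝ, 0 < α → α ≤ 1 / 2 →
      ∀ u u' : ℝ → ℝ, Continuous u →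
        (∀ a b : ℝ, u b - u a = ∫ t in a..b, u' t) →
        MemLp u 2 volume → MemLp u' 2 volume →
        ∀ M : ℝ, 0 ≤ M →
          (∀ y : ℝ, (∫⁻ x : ℝ, ENNReal.ofReal ((u x - u (x - y)) ^ 2))
              ≤ ENNReal.ofReal (M ^ 2 * |y|)) →
          slobHalfSq u ≤
            ENNReal.ofReal (C * ((∫ t : ℝ, (u t) ^ 2) + |Real.log α| * M ^ 2 +
              α * ∫ t : ℝ, (u' t) ^ 2)) := by
  refine ⟨8, by norm_num, ?_⟩
  intro α hα hα2 u u' hu hftc hu2 hu'2 M hM hweak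
  -- replace u' by a measurable representative v
  obtain ⟨v, hv_meas, hv_ae⟩ : ∃ v : ℝ → ℝ, Measurable v ∧ u' =ᵐ[volume] v := by
    rcases hu'2.1.aemeasurable with hm
    exact ⟨hm.mk u', hm.measurable_mk, hm.ae_eq_mk⟩
  have hftc' : ∀ a b : ℝ, u b - u a = ∫ t in a..b, v t := by
    intro a b
    rw [hftc a b]
    exact intervalIntegral.integral_congr_ae (hv_ae.mono fun x hx _ => hx)
  have hv2 : MemLp v 2 volume := hu'2.ae_eq hv_ae
  have hIv : (∫ t : ℝ, (v t)^2) = ∫ t : ℝ, (u' t)^2 :=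
    integral_congr_ae (hv_ae.mono fun x hx => by simp only []; rw [hx])
  -- notation
  set U : ENNReal := ∫⁻ t : ℝ, ENNReal.ofReal ((u t)^2) with hU_def
  set L : ENNReal := ∫⁻ t : ℝ, ENNReal.ofReal ((v t)^2) with hL_def
  set D : ℝ → ENNReal := fun h => ∫⁻ x : ℝ, ENNReal.ofReal ((u x - u (x - h))^2) with hD_def
  set G : ℝ → ENNReal := fun h => ∫⁻ x : ℝ, ENNReal.ofReal ((u x - u (x - h))^2 / h^2) with hG_def
  have hGD : ∀ h : ℝ, h ≠ 0 → G h = D h * (ENNReal.ofReal (h^2))⁻¹ := by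
    intro h hh
    have hh2 : (0:ℝ) < h^2 := by positivity
    have hpt : ∀ x : ℝ, ENNReal.ofReal ((u x - u (x - h))^2 / h^2)
        = ENNReal.ofReal ((u x - u (x - h))^2) * (ENNReal.ofReal (h^2))⁻¹ := fun x => by
      rw [ENNReal.ofReal_div_of_pos hh2, div_eq_mul_inv]
    simp only [hG_def, hD_def, hpt]
    exact lintegral_mul_const' _ _
      (ENNReal.inv_ne_top.mpr (ne_of_gt (ENNReal.ofReal_pos.mpr hh2)))
  have hcancel : ∀ h : ℝ, h ≠ 0 → ∀ a : ENNReal,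
      (ENNReal.ofReal (h^2) * a) * (ENNReal.ofReal (h^2))⁻¹ = a := by
    intro h hh a
    have hh2 : (0:ℝ) < h^2 := by positivity
    rw [mul_comm (ENNReal.ofReal (h^2)) a, mul_assoc,
      ENNReal.mul_inv_cancel (ne_of_gt (ENNReal.ofReal_pos.mpr hh2)) ENNReal.ofReal_ne_top,
      mul_one]
  -- the three regions
  set A : Set ℝ := Icc (-α) α with hA_def
  set S2 : Set ℝ := Ioc α 1 ∪ Ico (-1) (-α) with hS2_def
  set S3 : Set ℝ := Iio (-1) ∪ Ioi (1:ℝ) with hS3_def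
  have hS2meas : MeasurableSet S2 := measurableSet_Ioc.union measurableSet_Ico
  have hS3meas : MeasurableSet S3 := measurableSet_Iio.union measurableSet_Ioi
  have hsub : Aᶜ ⊆ S2 ∪ S3 := by
    intro h hh
    simp only [hA_def, mem_compl_iff, mem_Icc, not_and_or, not_le] at hh
    simp only [hS2_def, hS3_def, mem_union, mem_Ioc, mem_Ico, mem_Iio, mem_Ioi]
    rcases hh with hh | hh
    · rcases le_or_gt (-1) h with h1 | h1
      · exact Or.inl (Or.inr ⟨h1, hh⟩)
      · exact Or.inr (Or.inl h1)
    · rcases le_or_gt h 1 with h1 | h1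
      · exact Or.inl (Or.inl ⟨hh, h1⟩)
      · exact Or.inr (Or.inr h1)
  -- bound on A
  have hT1 : (∫⁻ h in A, G h) ≤ ENNReal.ofReal (2*α) * L := by
    have hb : ∀ᵐ h ∂(volume.restrict A), G h ≤ L := by
      have hae0 : ∀ᵐ h : ℝ ∂volume, h ≠ 0 := by
        have h0 : volume ({(0:ℝ)} : Set ℝ) = 0 := Real.volume_singleton
        have := measure_eq_zero_iff_ae_notMem.mp h0
        exact this.mono fun x hx => by simpa using hx
      filter_upwards [hae0.filter_mono (ae_mono Measure.restrict_le_self)] with h hh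
      rw [hGD h hh]
      calc D h * (ENNReal.ofReal (h^2))⁻¹
          ≤ (ENNReal.ofReal (h^2) * L) * (ENNReal.ofReal (h^2))⁻¹ := by
            gcongr
            exact aux_D_grad u v hv_meas hftc' hv2 h
        _ = L := hcancel h hh L
    calc (∫⁻ h in A, G h) ≤ ∫⁻ _ in A, L := lintegral_mono_ae hb
      _ = L * volume A := setLIntegral_const A L
      _ = ENNReal.ofReal (2*α) * L := by
          rw [hA_def, Real.volume_Icc, show α - -α = 2*α by ring, mul_comm]
  -- bound on S2
  have hT2 : (∫⁻ h in S2, G h) ≤ ENNReal.ofReal (M^2) * (2 * ENNReal.ofReal (-Real.log α)) := by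
    have hb : ∀ᵐ h ∂(volume.restrict S2), G h ≤ ENNReal.ofReal (M^2) * ENNReal.ofReal (|h|⁻¹) := by
      refine ae_restrict_of_forall_mem hS2meas fun h hh => ?_
      have habs : 0 < |h| := by
        simp only [hS2_def, mem_union, mem_Ioc, mem_Ico] at hh
        rcases hh with hh | hh
        · rw [abs_of_pos (lt_trans hα hh.1)]; exact lt_trans hα hh.1
        · rw [abs_of_neg (by linarith [hh.2] : h < 0)]; linarith [hh.2]
      have hh0 : h ≠ 0 := fun c => by simp [c] at habs
      have hh2 : (0:ℝ) < h^2 := by positivity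
      rw [hGD h hh0]
      calc D h * (ENNReal.ofReal (h^2))⁻¹
          ≤ ENNReal.ofReal (M^2 * |h|) * (ENNReal.ofReal (h^2))⁻¹ := by
            gcongr
            exact hweak h
        _ = ENNReal.ofReal (M^2 * |h| * (h^2)⁻¹) := by
            rw [← ENNReal.ofReal_inv_of_pos hh2, ← ENNReal.ofReal_mul (by positivity)]
        _ = ENNReal.ofReal (M^2) * ENNReal.ofReal (|h|⁻¹) := by
            rw [← ENNReal.ofReal_mul (by positivity)]
            congr 1
            rw [← sq_abs h]
            field_simp
    have hK : (∫⁻ h in S2, ENNReal.ofReal (|h|⁻¹)) = 2 * ENNReal.ofReal (-Real.log α) := by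
      have hdisj : Disjoint (Ioc α 1) (Ico (-1) (-α)) := by
        rw [Set.disjoint_left]
        rintro h ⟨h1, _⟩ ⟨_, h4⟩
        linarith
      have hrefl : Ico (-1) (-α) = (fun x : ℝ => -x) ⁻¹' (Ioc α 1) := by
        ext x
        simp only [mem_Ico, mem_preimage, mem_Ioc]
        constructor
        · rintro ⟨h1, h2⟩; exact ⟨by linarith, by linarith⟩
        · rintro ⟨h1, h2⟩; exact ⟨by linarith, by linarith⟩
      rw [hS2_def, lintegral_union measurableSet_Ico hdisj, hrefl,
        aux_reflect _ measurableSet_Ioc _ (fun x => by rw [abs_neg]),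
        aux_int_inv α hα (by linarith), two_mul]
    calc (∫⁻ h in S2, G h)
        ≤ ∫⁻ h in S2, ENNReal.ofReal (M^2) * ENNReal.ofReal (|h|⁻¹) := lintegral_mono_ae hb
      _ = ENNReal.ofReal (M^2) * ∫⁻ h in S2, ENNReal.ofReal (|h|⁻¹) :=
          lintegral_const_mul' _ _ ENNReal.ofReal_ne_top
      _ = ENNReal.ofReal (M^2) * (2 * ENNReal.ofReal (-Real.log α)) := by rw [hK]
  have hIu : Integrable (fun t : ℝ => (u t)^2) volume := (memLp_two_iff_integrable_sq hu2.1).mp hu2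
  have hUeq : U = ENNReal.ofReal (∫ t : ℝ, (u t)^2) :=
    (ofReal_integral_eq_lintegral_ofReal hIu
      (Filter.Eventually.of_forall fun t => sq_nonneg _)).symm
  -- bound on S3
  have hT3 : (∫⁻ h in S3, G h) ≤ 8 * U := by
    have hb : ∀ᵐ h ∂(volume.restrict S3), G h ≤ ENNReal.ofReal ((h^2)⁻¹) * (4 * U) := by
      refine ae_restrict_of_forall_mem hS3meas fun h hh => ?_
      have habs : 1 < |h| := by
        simp only [hS3_def, mem_union, mem_Iio, mem_Ioi] at hh
        rcases hh with hh | hh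
        · rw [abs_of_neg (by linarith)]; linarith
        · rw [abs_of_pos (by linarith)]; exact hh
      have hh0 : h ≠ 0 := by
        intro c; rw [c, abs_zero] at habs; linarith
      have hh2 : (0:ℝ) < h^2 := by positivity
      rw [hGD h hh0]
      calc D h * (ENNReal.ofReal (h^2))⁻¹
          ≤ (4 * U) * (ENNReal.ofReal (h^2))⁻¹ := by
            gcongr
            exact aux_D_L2 u hu h
        _ = ENNReal.ofReal ((h^2)⁻¹) * (4 * U) := by
            rw [← ENNReal.ofReal_inv_of_pos hh2, mul_comm]
    have hJ : (∫⁻ h in S3, ENNReal.ofReal ((h^2)⁻¹)) = 2 := by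
      have hdisj : Disjoint (Iio (-1:ℝ)) (Ioi (1:ℝ)) := by
        rw [Set.disjoint_left]
        intro h h1 h2
        simp only [mem_Iio] at h1
        simp only [mem_Ioi] at h2
        linarith
      have hrefl : Iio (-1:ℝ) = (fun x : ℝ => -x) ⁻¹' (Ioi 1) := by
        ext x
        simp only [mem_Iio, mem_preimage, mem_Ioi]
        constructor <;> intro <;> linarith
      rw [hS3_def, lintegral_union measurableSet_Ioi hdisj, hrefl,
        aux_reflect _ measurableSet_Ioi _ (fun x => by rw [neg_pow]; norm_num),
        aux_int_invsq]
      norm_num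
    calc (∫⁻ h in S3, G h)
        ≤ ∫⁻ h in S3, ENNReal.ofReal ((h^2)⁻¹) * (4 * U) := lintegral_mono_ae hb
      _ = (∫⁻ h in S3, ENNReal.ofReal ((h^2)⁻¹)) * (4 * U) :=
          lintegral_mul_const' _ _ (ENNReal.mul_ne_top (by norm_num)
            (by rw [hUeq]; exact ENNReal.ofReal_ne_top))
      _ = 2 * (4 * U) := by rw [hJ]
      _ = 8 * U := by ring
  -- combine
  have hsplit : slobHalfSq u ≤ (∫⁻ h in A, G h) + ((∫⁻ h in S2, G h) + ∫⁻ h in S3, G h) := by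
    rw [slob_repr u hu]
    rw [← lintegral_add_compl (fun h => G h) (measurableSet_Icc : MeasurableSet A)]
    gcongr
    calc (∫⁻ h in Aᶜ, G h) ≤ ∫⁻ h in S2 ∪ S3, G h := lintegral_mono_set hsub
      _ ≤ (∫⁻ h in S2, G h) + ∫⁻ h in S3, G h := lintegral_union_le _ _ _
  -- convert to real quantities
  have hIv2 : Integrable (fun t : ℝ => (v t)^2) volume := (memLp_two_iff_integrable_sq hv2.1).mp hv2
  have hLeq : L = ENNReal.ofReal (∫ t : ℝ, (v t)^2) :=
    (ofReal_integral_eq_lintegral_ofReal hIv2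
      (Filter.Eventually.of_forall fun t => sq_nonneg _)).symm
  have hIu_nn : (0:ℝ) ≤ ∫ t : ℝ, (u t)^2 := integral_nonneg fun t => sq_nonneg _
  have hIv_nn : (0:ℝ) ≤ ∫ t : ℝ, (v t)^2 := integral_nonneg fun t => sq_nonneg _
  have hlog_nn : (0:ℝ) ≤ -Real.log α := by
    have : Real.log α ≤ 0 := Real.log_nonpos hα.le (by linarith)
    linarith
  have habs_log : |Real.log α| = -Real.log α :=
    abs_of_nonpos (Real.log_nonpos hα.le (by linarith))
  calc slobHalfSq u
      ≤ (∫⁻ h in A, G h) + ((∫⁻ h in S2, G h) + ∫⁻ h in S3, G h) := hsplit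
    _ ≤ ENNReal.ofReal (2*α) * L +
        (ENNReal.ofReal (M^2) * (2 * ENNReal.ofReal (-Real.log α)) + 8 * U) := by
        gcongr
    _ = ENNReal.ofReal (2*α*(∫ t : ℝ, (v t)^2)) +
        (ENNReal.ofReal (2*M^2*(-Real.log α)) + ENNReal.ofReal (8*(∫ t : ℝ, (u t)^2))) := by
        rw [hUeq, hLeq]
        congr 1
        · rw [← ENNReal.ofReal_mul (by positivity)]
        congr 1
        · rw [show (2:ENNReal) = ENNReal.ofReal 2 by norm_num,
            ← ENNReal.ofReal_mul (by positivity), ← ENNReal.ofReal_mul (by positivity)]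
          congr 1
          ring
        · rw [show (8:ENNReal) = ENNReal.ofReal 8 by norm_num,
            ← ENNReal.ofReal_mul (by norm_num)]
    _ = ENNReal.ofReal (2*α*(∫ t : ℝ, (v t)^2) + (2*M^2*(-Real.log α) + 8*(∫ t : ℝ, (u t)^2))) := by
        rw [← ENNReal.ofReal_add (by positivity) (by positivity),
          ← ENNReal.ofReal_add (by positivity) (by positivity)]
    _ ≤ ENNReal.ofReal (8 * ((∫ t : ℝ, (u t) ^ 2) + |Real.log α| * M ^ 2 +
          α * ∫ t : ℝ, (u' t) ^ 2)) := by
        apply ENNReal.ofReal_le_ofReal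
        rw [← hIv, habs_log]
        nlinarith [sq_nonneg M, hIv_nn, hα.le, hlog_nn]
end

section
/- For every β₀ > 0 there exists a constant C > 0, independent of α and τ, with the following property. Let α, τ > 0 and 0 < β ≤ β₀, let u : ℝ → ℝ be continuous, affine on each interval [kτ, (k+1)τ] (k ∈ ℤ), in L²(ℝ) with u̇ ∈ L²(ℝ), and let v be its upwinded interpolant (v continuous, v(kτ) = u(kτ) for all k, of the form c₁ + c₂ exp(−βt/α) on each interval). Then α ∫ |v̇|² ≤ C ( |u|²_{H^{1/2}} + α ∫ |u̇|² ), where |u|_{H^{1/2}} is the Slobodetski seminorm. -/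
open MeasureTheory

/-- `u` is affine on each interval `[kτ, (k+1)τ]`, `k ∈ ℤ`. -/
def PWAffineZ (τ : ℝ) (u : ℝ → ℝ) : Prop :=
  ∀ k : ℤ, ∃ c₁ c₂ : ℝ,
    ∀ t ∈ Set.Icc ((k : ℝ) * τ) (((k : ℝ) + 1) * τ), u t = c₁ + c₂ * t

/-- `v` is of the upwinded form `c₁ + c₂ exp(−βt/α)` on each interval
`[kτ, (k+1)τ]`, `k ∈ ℤ`. -/
def UpwindZ (α β τ : ℝ) (v : ℝ → ℝ) : Prop :=
  ∀ k : ℤ, ∃ c₁ c₂ : ℝ,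
    ∀ t ∈ Set.Icc ((k : ℝ) * τ) (((k : ℝ) + 1) * τ),
      v t = c₁ + c₂ * Real.exp (-(β * t) / α)

lemma exp_deriv_aux (c t : ℝ) : HasDerivAt (fun s => Real.exp (c * s)) (Real.exp (c * t) * c) t := by
  simpa using ((hasDerivAt_id t).const_mul c).exp

lemma key_int (c w a b : ℝ) (hc : c ≠ 0) :
    ∫ t in a..b, (w * Real.exp (c * t)) ^ 2
      = w ^ 2 / (2 * c) * (Real.exp (2 * (c * b)) - Real.exp (2 * (c * a))) := by
  have h : ∀ t ∈ Set.uIcc a b, HasDerivAt (fun s => w ^ 2 / (2 * c) * Real.exp (2 * c * s))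
      ((w * Real.exp (c * t)) ^ 2) t := by
    intro t _
    have := (exp_deriv_aux (2 * c) t).const_mul (w ^ 2 / (2 * c))
    refine this.congr_deriv ?_
    rw [mul_pow, ← Real.exp_nat_mul]
    field_simp
    ring
  have := intervalIntegral.integral_eq_sub_of_hasDerivAt h (by
    apply Continuous.intervalIntegrable; continuity)
  rw [this]; ring_nf

lemma key_calc (α β a b w : ℝ) (hα : 0 < α) (hβ : 0 < β) (hab : a < b) :
    α * ∫ t in a..b, (w * (β / α) * Real.exp (-(β / α) * t)) ^ 2
      ≤ (α / (b - a) + β / 2) *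
          (w * (Real.exp (-(β / α) * b) - Real.exp (-(β / α) * a))) ^ 2 := by
  have hc0 : -(β / α) ≠ 0 := by
    have : 0 < β / α := div_pos hβ hα
    linarith
  rw [key_int (-(β / α)) (w * (β / α)) a b hc0]
  set x : ℝ := Real.exp (-(β / α) * a) with hxd
  set y : ℝ := Real.exp (-(β / α) * b) with hyd
  have hy : 0 < y := Real.exp_pos _
  have hx : 0 < x := Real.exp_pos _
  have hT : 0 < b - a := by linarith
  have hxy : x = y * Real.exp (β / α * (b - a)) := by
    rw [hxd, hyd, ← Real.exp_add]; ring_nf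
  have hexp : 1 + β / α * (b - a) ≤ Real.exp (β / α * (b - a)) :=
    by linarith [Real.add_one_le_exp (β / α * (b - a))]
  have hq : 0 < β / α * (b - a) := mul_pos (div_pos hβ hα) hT
  have hgt : y < x := by
    rw [hxy]
    nlinarith [mul_pos hy hq]
  have hkey : β * (b - a) * y ≤ α * (x - y) := by
    have h1 : y * (1 + β / α * (b - a)) ≤ x := by
      rw [hxy]; nlinarith
    have h2 : α * (y * (1 + β / α * (b - a))) = α * y + β * (b - a) * y := by
      field_simp
    nlinarith
  have P : β / 2 * (x + y) * (b - a) ≤ (α + β / 2 * (b - a)) * (x - y) := by nlinarith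
  have e1 : Real.exp (2 * (-(β / α) * b)) = y ^ 2 := by
    rw [hyd, ← Real.exp_nat_mul]; norm_num
  have e2 : Real.exp (2 * (-(β / α) * a)) = x ^ 2 := by
    rw [hxd, ← Real.exp_nat_mul]; norm_num
  rw [e1, e2]
  have hL : α * ((w * (β / α)) ^ 2 / (2 * -(β / α)) * (y ^ 2 - x ^ 2))
      = w ^ 2 * (β / 2 * (x + y) * (x - y)) := by
    field_simp
    ring
  rw [hL]
  have hR : (α / (b - a) + β / 2) * (w * (y - x)) ^ 2
      = w ^ 2 * ((α / (b - a) + β / 2) * ((x - y) * (x - y))) := by ring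
  rw [hR]
  apply mul_le_mul_of_nonneg_left _ (sq_nonneg w)
  have h2 : (α / (b - a) + β / 2) * ((x - y) * (x - y)) * (b - a)
      = (α + β / 2 * (b - a)) * (x - y) * (x - y) := by
    field_simp
  have h1 : β / 2 * (x + y) * (x - y) * (b - a)
      ≤ (α + β / 2 * (b - a)) * (x - y) * (x - y) := by nlinarith
  rw [← h2] at h1
  have := (mul_le_mul_iff_of_pos_right hT).mp (by linarith [h1] :
    β / 2 * (x + y) * (x - y) * (b - a)
      ≤ (α / (b - a) + β / 2) * ((x - y) * (x - y)) * (b - a))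
  linarith [this]

/-- **Energy bound for the upwinded interpolant, uniformly in `α` and `τ`:** for every
`β₀ > 0` there is `C > 0` such that for all `α, τ > 0`, `0 < β ≤ β₀`, every continuous
`τ`-piecewise affine `u ∈ L²(ℝ)` with piecewise derivative `u' ∈ L²(ℝ)`, and `v` its
upwinded interpolant with piecewise derivative `v'`,
`α ∫ |v̇|² ≤ C ( |u|²_{H^{1/2}} + α ∫ |u̇|² )`. -/
theorem upwind_interpolant_energy_bound :
    ∀ β₀ : ℝ, 0 < β₀ → ∃ C > (0 : ℝ), ∀ α τ β : ℝ, 0 < α → 0 < τ → 0 < β → β ≤ β₀ →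
      ∀ u u' v v' : ℝ → ℝ,
        Continuous u → PWAffineZ τ u → MemLp u 2 volume →
        (∀ k : ℤ, ∀ t ∈ Set.Ioo ((k : ℝ) * τ) (((k : ℝ) + 1) * τ),
          HasDerivAt u (u' t) t) →
        MemLp u' 2 volume →
        Continuous v → (∀ k : ℤ, v ((k : ℝ) * τ) = u ((k : ℝ) * τ)) →
        UpwindZ α β τ v →
        (∀ k : ℤ, ∀ t ∈ Set.Ioo ((k : ℝ) * τ) (((k : ℝ) + 1) * τ),
          HasDerivAt v (v' t) t) →
        ENNReal.ofReal α * (∫⁻ x : ℝ, ENNReal.ofReal ((v' x) ^ 2))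
          ≤ ENNReal.ofReal C *
              (slobHalfSq u + ENNReal.ofReal α * ∫⁻ x : ℝ, ENNReal.ofReal ((u' x) ^ 2)) := by
  intro β₀ hβ₀
  refine ⟨1 + β₀ / 2, by positivity, ?_⟩
  intro α τ β hα hτ hβ hββ₀ u u' v v' hu hPW _ hud _ hv hvu hUp hvd
  choose p q hpq using hPW
  choose r w hrw using hUp
  set I : ℤ → Set ℝ := fun k => Set.Ioo ((k : ℝ) * τ) (((k : ℝ) + 1) * τ) with hIdef
  have h_ab : ∀ k : ℤ, (k : ℝ) * τ < ((k : ℝ) + 1) * τ := by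
    intro k; nlinarith
  -- disjointness
  have hdisj : Pairwise (Function.onFun Disjoint I) := by
    intro k l hkl
    have key : ∀ k l : ℤ, k < l → Disjoint (I k) (I l) := by
      intro k l h
      apply Set.disjoint_left.2
      intro x hx1 hx2
      have h1 : (k : ℝ) + 1 ≤ (l : ℝ) := by exact_mod_cast h
      have h2 : ((k : ℝ) + 1) * τ ≤ (l : ℝ) * τ :=
        mul_le_mul_of_nonneg_right h1 hτ.le
      have := hx1.2
      have := hx2.1
      simp only [hIdef, Set.mem_Ioo] at hx1 hx2
      linarith [hx1.2, hx2.1]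
    rcases hkl.lt_or_gt with h | h
    · exact key k l h
    · exact (key l k h).symm
  -- the grid points have measure zero
  have hnull : volume (⋃ k, I k)ᶜ = 0 := by
    apply measure_mono_null ?_ ((Set.countable_range fun k : ℤ => (k : ℝ) * τ).measure_zero _)
    intro x hx
    simp only [Set.mem_compl_iff, Set.mem_iUnion, not_exists] at hx
    have h1 : (⌊x / τ⌋ : ℝ) * τ ≤ x := by
      rw [← le_div_iff₀ hτ]; exact Int.floor_le _
    have h2 : x < ((⌊x / τ⌋ : ℝ) + 1) * τ := by
      rw [← div_lt_iff₀ hτ]; push_cast; exact Int.lt_floor_add_one _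
    by_contra hne
    simp only [Set.mem_range, not_exists] at hne
    exact hx ⌊x / τ⌋ ⟨lt_of_le_of_ne h1 (fun h => hne ⌊x / τ⌋ h), h2⟩
  have huniv : ∀ f : ℝ → ENNReal, ∫⁻ x, f x = ∑' k : ℤ, ∫⁻ x in I k, f x := by
    intro f
    rw [← setLIntegral_univ, setLIntegral_congr (ae_eq_univ.2 hnull).symm]
    exact lintegral_iUnion (fun k => measurableSet_Ioo) hdisj f
  -- endpoint membership
  have hmem_a : ∀ k : ℤ, (k : ℝ) * τ ∈ Set.Icc ((k : ℝ) * τ) (((k : ℝ) + 1) * τ) :=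
    fun k => ⟨le_refl _, (h_ab k).le⟩
  have hmem_b : ∀ k : ℤ, ((k : ℝ) + 1) * τ ∈ Set.Icc ((k : ℝ) * τ) (((k : ℝ) + 1) * τ) :=
    fun k => ⟨(h_ab k).le, le_refl _⟩
  -- difference of endpoint values
  have hub : ∀ k : ℤ, u (((k : ℝ) + 1) * τ) - u ((k : ℝ) * τ) = q k * τ := by
    intro k
    rw [hpq k _ (hmem_b k), hpq k _ (hmem_a k)]; ring
  have hE : ∀ s : ℝ, Real.exp (-(β * s) / α) = Real.exp (-(β / α) * s) := by
    intro s; congr 1; ring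
  -- v endpoint relation
  have hw : ∀ k : ℤ,
      w k * (Real.exp (-(β / α) * (((k : ℝ) + 1) * τ)) - Real.exp (-(β / α) * ((k : ℝ) * τ)))
        = q k * τ := by
    intro k
    have hva : v ((k : ℝ) * τ) = r k + w k * Real.exp (-(β / α) * ((k : ℝ) * τ)) := by
      rw [hrw k _ (hmem_a k), hE]
    have hvb : v (((k : ℝ) + 1) * τ)
        = r k + w k * Real.exp (-(β / α) * (((k : ℝ) + 1) * τ)) := by
      rw [hrw k _ (hmem_b k), hE]
    have hvb' : v (((k : ℝ) + 1) * τ) = u (((k : ℝ) + 1) * τ) := by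
      have := hvu (k + 1)
      push_cast at this
      exact this
    have hva' : v ((k : ℝ) * τ) = u ((k : ℝ) * τ) := hvu k
    have := hub k
    rw [← hva', ← hvb', hva, hvb] at this
    linarith [this]
  -- derivative identification for u
  have hu'eq : ∀ k : ℤ, ∀ t ∈ I k, u' t = q k := by
    intro k t ht
    have h2 : HasDerivAt u (q k) t := by
      have haff : HasDerivAt (fun s => p k + q k * s) (q k) t := by
        simpa using ((hasDerivAt_id t).const_mul (q k)).const_add (p k)
      apply haff.congr_of_eventuallyEq
      filter_upwards [isOpen_Ioo.mem_nhds ht] with s hs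
      exact hpq k s (Set.Ioo_subset_Icc_self hs)
    exact (hud k t ht).unique h2
  -- derivative identification for v
  have hv'eq : ∀ k : ℤ, ∀ t ∈ I k,
      v' t = w k * (Real.exp (-(β / α) * t) * -(β / α)) := by
    intro k t ht
    have h2 : HasDerivAt v (w k * (Real.exp (-(β / α) * t) * -(β / α))) t := by
      have hder : HasDerivAt (fun s => r k + w k * Real.exp (-(β / α) * s))
          (w k * (Real.exp (-(β / α) * t) * -(β / α))) t :=
        ((exp_deriv_aux (-(β / α)) t).const_mul (w k)).const_add (r k)
      apply hder.congr_of_eventuallyEq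
      filter_upwards [isOpen_Ioo.mem_nhds ht] with s hs
      rw [hrw k s (Set.Ioo_subset_Icc_self hs), hE]
    exact (hvd k t ht).unique h2
  -- the real per-interval integral for v'
  set L : ℤ → ℝ := fun k =>
    ∫ t in ((k : ℝ) * τ)..(((k : ℝ) + 1) * τ),
      (w k * (β / α) * Real.exp (-(β / α) * t)) ^ 2 with hLdef
  have hv'int : ∀ k : ℤ, ∫⁻ t in I k, ENNReal.ofReal ((v' t) ^ 2) = ENNReal.ofReal (L k) := by
    intro k
    have hcongr : ∫⁻ t in I k, ENNReal.ofReal ((v' t) ^ 2)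
        = ∫⁻ t in I k, ENNReal.ofReal ((w k * (β / α) * Real.exp (-(β / α) * t)) ^ 2) := by
      apply setLIntegral_congr_fun measurableSet_Ioo
      intro t ht
      beta_reduce
      rw [hv'eq k t ht]
      congr 1
      ring
    rw [hcongr, setLIntegral_congr (Ioo_ae_eq_Ioc (μ := volume))]
    have hconts : Continuous fun t => (w k * (β / α) * Real.exp (-(β / α) * t)) ^ 2 :=
      (continuous_const.mul (Real.continuous_exp.comp (continuous_const.mul continuous_id))).pow 2
    rw [← ofReal_integral_eq_lintegral_ofReal hconts.integrableOn_Ioc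
      (ae_of_all _ fun t => sq_nonneg _)]
    rw [hLdef]
    congr 1
    exact (intervalIntegral.integral_of_le (h_ab k).le).symm
  -- per-interval energy bound (real numbers)
  have hτeq : ∀ k : ℤ, ((k : ℝ) + 1) * τ - (k : ℝ) * τ = τ := by intro k; ring
  have hbound : ∀ k : ℤ, α * L k ≤ (1 + β₀ / 2) * ((q k * τ) ^ 2 + α * (q k ^ 2 * τ)) := by
    intro k
    have h1 := key_calc α β ((k : ℝ) * τ) (((k : ℝ) + 1) * τ) (w k) hα hβ (h_ab k)
    rw [hw k, hτeq k] at h1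
    have h2 : α / τ * (q k * τ) ^ 2 = α * (q k ^ 2 * τ) := by field_simp
    nlinarith [sq_nonneg (q k * τ), mul_nonneg (mul_nonneg hα.le (sq_nonneg (q k))) hτ.le,
      hβ₀.le, mul_nonneg (by linarith : (0:ℝ) ≤ β₀ - β) (sq_nonneg (q k * τ))]
  -- lintegral of u'^2 on each cell
  have hu'int : ∀ k : ℤ, ∫⁻ t in I k, ENNReal.ofReal ((u' t) ^ 2)
      = ENNReal.ofReal (q k ^ 2 * τ) := by
    intro k
    have hcongr : ∫⁻ t in I k, ENNReal.ofReal ((u' t) ^ 2)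
        = ∫⁻ _ in I k, ENNReal.ofReal (q k ^ 2) :=
      setLIntegral_congr_fun measurableSet_Ioo (fun t ht => by rw [hu'eq k t ht])
    rw [hcongr, setLIntegral_const, Real.volume_Ioo, ← ENNReal.ofReal_mul (sq_nonneg _)]
    congr 1
    ring
  -- slobodetski lower bound on each cell
  have hslob_k : ∀ k : ℤ, ENNReal.ofReal ((q k * τ) ^ 2)
      = ∫⁻ x in I k, ∫⁻ y in I k, ENNReal.ofReal ((u x - u y) ^ 2 / |x - y| ^ 2) := by
    intro k
    have hinner : ∀ x ∈ I k,
        ∫⁻ y in I k, ENNReal.ofReal ((u x - u y) ^ 2 / |x - y| ^ 2)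
          = ENNReal.ofReal (q k ^ 2) * ENNReal.ofReal τ := by
      intro x hx
      have hne : ({x}ᶜ : Set ℝ) ∈ ae volume :=
        compl_mem_ae_iff.2 (measure_singleton x)
      have hae : ∀ᵐ y ∂(volume.restrict (I k)),
          ENNReal.ofReal ((u x - u y) ^ 2 / |x - y| ^ 2) = ENNReal.ofReal (q k ^ 2) := by
        filter_upwards [ae_restrict_mem measurableSet_Ioo, ae_restrict_of_ae hne] with y hy hyx
        have hyx' : y ≠ x := hyx
        have hxy0 : x - y ≠ 0 := sub_ne_zero_of_ne (Ne.symm hyx')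
        rw [hpq k x (Set.Ioo_subset_Icc_self hx), hpq k y (Set.Ioo_subset_Icc_self hy), sq_abs]
        congr 1
        field_simp
        ring
      rw [lintegral_congr_ae hae, setLIntegral_const, Real.volume_Ioo]
      have : ((k : ℝ) + 1) * τ - (k : ℝ) * τ = τ := by ring
      rw [this]
    have houter : ∫⁻ x in I k, ∫⁻ y in I k, ENNReal.ofReal ((u x - u y) ^ 2 / |x - y| ^ 2)
        = ∫⁻ _ in I k, (ENNReal.ofReal (q k ^ 2) * ENNReal.ofReal τ) :=
      setLIntegral_congr_fun measurableSet_Ioo hinner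
    rw [houter, setLIntegral_const, Real.volume_Ioo]
    have : ((k : ℝ) + 1) * τ - (k : ℝ) * τ = τ := by ring
    rw [this, ← ENNReal.ofReal_mul (sq_nonneg _), ← ENNReal.ofReal_mul (by positivity)]
    congr 1
    ring
  -- assemble everything
  have hLHS : ∫⁻ x, ENNReal.ofReal ((v' x) ^ 2) = ∑' k : ℤ, ENNReal.ofReal (L k) := by
    rw [huniv fun x => ENNReal.ofReal ((v' x) ^ 2)]
    exact tsum_congr hv'int
  have hRHSu : ∫⁻ x, ENNReal.ofReal ((u' x) ^ 2)
      = ∑' k : ℤ, ENNReal.ofReal (q k ^ 2 * τ) := by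
    rw [huniv fun x => ENNReal.ofReal ((u' x) ^ 2)]
    exact tsum_congr hu'int
  have hslob : ∑' k : ℤ, ENNReal.ofReal ((q k * τ) ^ 2) ≤ slobHalfSq u := by
    have step : ∑' k : ℤ, ENNReal.ofReal ((q k * τ) ^ 2)
        ≤ ∑' k : ℤ, ∫⁻ x in I k, ∫⁻ y, ENNReal.ofReal ((u x - u y) ^ 2 / |x - y| ^ 2) := by
      apply ENNReal.tsum_le_tsum
      intro k
      rw [hslob_k k]
      exact lintegral_mono fun x => setLIntegral_le_lintegral _ _
    refine step.trans_eq ?_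
    exact (huniv fun x => ∫⁻ y, ENNReal.ofReal ((u x - u y) ^ 2 / |x - y| ^ 2)).symm
  calc ENNReal.ofReal α * ∫⁻ x, ENNReal.ofReal ((v' x) ^ 2)
      = ∑' k : ℤ, ENNReal.ofReal (α * L k) := by
        rw [hLHS, ← ENNReal.tsum_mul_left]
        exact tsum_congr fun k => (ENNReal.ofReal_mul hα.le).symm
    _ ≤ ∑' k : ℤ, ENNReal.ofReal ((1 + β₀ / 2) * ((q k * τ) ^ 2 + α * (q k ^ 2 * τ))) :=
        ENNReal.tsum_le_tsum fun k => ENNReal.ofReal_le_ofReal (hbound k)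
    _ = ENNReal.ofReal (1 + β₀ / 2) *
        ((∑' k : ℤ, ENNReal.ofReal ((q k * τ) ^ 2)) +
          ENNReal.ofReal α * ∑' k : ℤ, ENNReal.ofReal (q k ^ 2 * τ)) := by
        rw [← ENNReal.tsum_mul_left, ← ENNReal.tsum_add, ← ENNReal.tsum_mul_left]
        apply tsum_congr
        intro k
        rw [ENNReal.ofReal_mul (by positivity : (0:ℝ) ≤ 1 + β₀ / 2)]
        congr 1
        rw [ENNReal.ofReal_add (sq_nonneg (q k * τ)) (by positivity), ENNReal.ofReal_mul hα.le]
    _ ≤ ENNReal.ofReal (1 + β₀ / 2) *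
        (slobHalfSq u + ENNReal.ofReal α * ∫⁻ x, ENNReal.ofReal ((u' x) ^ 2)) := by
        apply mul_le_mul_right
        rw [hRHSu]
        exact add_le_add hslob (le_refl _)
end

section
/- Fix β > 0 and let G_α(s) = (β/α) e^{−βs/α} for s ≥ 0 and G_α(s) = 0 for s < 0. For every ε > 0 there exists C > 0 such that for all τ > 0, all α with 0 < α ≤ τ/C, and all u ∈ L²(ℝ) which are constant on each interval (kτ, (k+1)τ) (k ∈ ℤ), one has ‖u − G_α ∗ u‖_{L²(ℝ)} ≤ ε ‖u‖_{L²(ℝ)}. -/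
open MeasureTheory

/-- Exponential upwind kernel: `G_α(s) = (β/α) e^{−βs/α}` for `s ≥ 0`, `0` for `s < 0`. -/
noncomputable def GkerB (α β : ℝ) (s : ℝ) : ℝ :=
  if 0 ≤ s then (β / α) * Real.exp (-(β * s) / α) else 0

/-- Convolution of two functions on `ℝ`. -/
noncomputable def conv (f g : ℝ → ℝ) (t : ℝ) : ℝ :=
  ∫ s : ℝ, f s * g (t - s)

open Real Set
open scoped ENNReal NNReal

set_option linter.unusedSectionVars false


section ker
variable {α β : ℝ} (hα : 0 < α) (hβ : 0 < β)


lemma GkerB_eq (α β : ℝ) : GkerB α β =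
    Set.indicator (Ici 0) (fun s => (β / α) * Real.exp (-((β/α) * s))) := by
  funext s
  simp only [GkerB, Set.indicator_apply, mem_Ici]
  congr 2
  ring

lemma measurable_GkerB : Measurable (GkerB α β) := by
  rw [GkerB_eq]
  exact ((measurable_id.const_mul _).neg.exp.const_mul _).indicator measurableSet_Ici

include hα hβ

lemma GkerB_nonneg : ∀ s, 0 ≤ GkerB α β s := by
  intro s
  unfold GkerB
  split_ifs
  · positivity
  · exact le_refl 0

lemma expOn (r : ℝ) (hr : 0 < r) (a : ℝ) :
    IntegrableOn (fun x : ℝ => Real.exp (-(r * x))) (Ioi a) := by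
  have h0 := exp_neg_integrableOn_Ioi a hr
  simpa only [neg_mul] using h0

lemma integral_exp_Ioi {r : ℝ} (hr : 0 < r) :
    ∫ t in Ioi (0:ℝ), Real.exp (-(r * t)) = 1 / r := by
  have := Real.integral_rpow_mul_exp_neg_mul_Ioi (a := 1) one_pos hr
  rw [Real.Gamma_one, mul_one, Real.rpow_one] at this
  rw [← this]
  refine setIntegral_congr_fun measurableSet_Ioi fun t ht => ?_
  rw [sub_self, Real.rpow_zero, one_mul]

lemma integrableOn_mul_exp_Ioi {r : ℝ} (hr : 0 < r) :
    IntegrableOn (fun t => t * Real.exp (-(r * t))) (Ioi (0:ℝ)) := by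
  have hint : IntegrableOn (fun t => (2/r) * Real.exp (-(r/2 * t))) (Ioi (0:ℝ)) :=
    (expOn hα hβ _ (half_pos hr) 0).const_mul _
  have hmeas : AEStronglyMeasurable (fun t : ℝ => t * Real.exp (-(r * t)))
      (volume.restrict (Ioi (0:ℝ))) :=
    (measurable_id.mul (measurable_id.const_mul r).neg.exp).aestronglyMeasurable
  refine Integrable.mono' hint hmeas ?_
  rw [ae_restrict_iff' measurableSet_Ioi]
  filter_upwards with t ht
  have ht : (0:ℝ) < t := ht
  have h1 : r/2 * t ≤ Real.exp (r/2 * t) := le_trans (by linarith) (Real.add_one_le_exp _)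
  have h2 : Real.exp (-(r * t)) = Real.exp (-(r/2 * t)) * Real.exp (-(r/2 * t)) := by
    rw [← Real.exp_add]; ring_nf
  have h3 : t * Real.exp (-(r/2 * t)) ≤ 2/r := by
    rw [Real.exp_neg, inv_eq_one_div, mul_one_div, div_le_div_iff₀ (Real.exp_pos _) hr]
    nlinarith [h1]
  rw [Real.norm_eq_abs, abs_of_nonneg (by positivity)]
  calc t * Real.exp (-(r * t)) = (t * Real.exp (-(r/2 * t))) * Real.exp (-(r/2*t)) := by
        rw [h2]; ring
    _ ≤ 2/r * Real.exp (-(r/2*t)) := by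
        exact mul_le_mul_of_nonneg_right h3 (Real.exp_pos _).le

lemma integral_mul_exp_Ioi {r : ℝ} (hr : 0 < r) :
    ∫ t in Ioi (0:ℝ), t * Real.exp (-(r * t)) = 1 / r ^ 2 := by
  have := Real.integral_rpow_mul_exp_neg_mul_Ioi (a := 2) two_pos hr
  rw [Real.Gamma_two, mul_one] at this
  have heq : ∀ t ∈ Ioi (0:ℝ), t ^ ((2:ℝ) - 1) * Real.exp (-(r * t))
      = t * Real.exp (-(r * t)) := by
    intro t ht
    rw [show (2:ℝ) - 1 = 1 by norm_num, Real.rpow_one]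
  rw [setIntegral_congr_fun measurableSet_Ioi heq] at this
  rw [this, show (2:ℝ) = ((2:ℕ):ℝ) by norm_num, Real.rpow_natCast, div_pow, one_pow]

lemma integrable_GkerB : Integrable (GkerB α β) := by
  rw [GkerB_eq]
  rw [integrable_indicator_iff measurableSet_Ici, integrableOn_Ici_iff_integrableOn_Ioi]
  exact (expOn hα hβ _ (by positivity) 0).const_mul _

lemma integral_GkerB : ∫ s, GkerB α β s = 1 := by
  rw [GkerB_eq, integral_indicator measurableSet_Ici, integral_Ici_eq_integral_Ioi,
    integral_const_mul, integral_exp_Ioi hα hβ (by positivity)]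
  field_simp

lemma integrable_GkerB_mul : Integrable (fun s => GkerB α β s * s) := by
  have : (fun s => GkerB α β s * s)
      = Set.indicator (Ici 0) (fun s => (β / α) * (s * Real.exp (-((β/α) * s)))) := by
    funext s
    rw [GkerB_eq]
    by_cases hs : s ∈ Ici (0:ℝ)
    · rw [Set.indicator_of_mem hs, Set.indicator_of_mem hs]; ring
    · rw [Set.indicator_of_notMem hs, Set.indicator_of_notMem hs, zero_mul]
  rw [this, integrable_indicator_iff measurableSet_Ici, integrableOn_Ici_iff_integrableOn_Ioi]
  exact (integrableOn_mul_exp_Ioi hα hβ (by positivity)).const_mul _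

lemma integral_GkerB_mul : ∫ s, GkerB α β s * s = α / β := by
  have : (fun s => GkerB α β s * s)
      = Set.indicator (Ici 0) (fun s => (β / α) * (s * Real.exp (-((β/α) * s)))) := by
    funext s
    rw [GkerB_eq]
    by_cases hs : s ∈ Ici (0:ℝ)
    · rw [Set.indicator_of_mem hs, Set.indicator_of_mem hs]; ring
    · rw [Set.indicator_of_notMem hs, Set.indicator_of_notMem hs, zero_mul]
  rw [this, integral_indicator measurableSet_Ici, integral_Ici_eq_integral_Ioi,
    integral_const_mul, integral_mul_exp_Ioi hα hβ (by positivity)]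
  field_simp

end ker


lemma lintegral_shift (u : ℝ → ℝ≥0∞) (s : ℝ) :
    ∫⁻ t : ℝ, u (t - s) = ∫⁻ t : ℝ, u t :=
  (measurePreserving_sub_right volume s).lintegral_comp_emb
    (MeasurableEquiv.subRight s).measurableEmbedding u

lemma sq_diff_ofReal_le (a b : ℝ) :
    ENNReal.ofReal ((a - b)^2) ≤ 2 * ENNReal.ofReal (a^2) + 2 * ENNReal.ofReal (b^2) := by
  have h2 : ((2:ℝ≥0∞)) = ENNReal.ofReal (2:ℝ) := by norm_num
  rw [h2, ← ENNReal.ofReal_mul (by norm_num), ← ENNReal.ofReal_mul (by norm_num),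
    ← ENNReal.ofReal_add (by positivity) (by positivity)]
  exact ENNReal.ofReal_le_ofReal (by nlinarith [sq_nonneg (a+b)])

lemma lemB {τ s : ℝ} (hτ : 0 < τ) (hs : 0 < s) {u : ℝ → ℝ}
    (hu : AEMeasurable u volume)
    (hpc : ∀ k : ℤ, ∃ c : ℝ, ∀ t ∈ Set.Ioo ((k : ℝ) * τ) (((k : ℝ) + 1) * τ), u t = c) :
    ∫⁻ t : ℝ, ENNReal.ofReal ((u t - u (t - s))^2)
      ≤ ENNReal.ofReal (4*s/τ) * ∫⁻ t : ℝ, ENNReal.ofReal (u t ^ 2) := by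
  have husq : AEMeasurable (fun t => ENNReal.ofReal (u t ^ 2)) volume :=
    (hu.pow_const 2).ennreal_ofReal
  rcases le_or_gt τ s with hts | hts
  · -- crude bound: 4 ‖u‖² ≤ (4 s/τ) ‖u‖²
    have hshift : ∫⁻ t : ℝ, ENNReal.ofReal (u (t - s) ^ 2)
        = ∫⁻ t : ℝ, ENNReal.ofReal (u t ^ 2) :=
      lintegral_shift (fun t => ENNReal.ofReal (u t ^ 2)) s
    calc ∫⁻ t : ℝ, ENNReal.ofReal ((u t - u (t - s))^2)
        ≤ ∫⁻ t : ℝ, (2 * ENNReal.ofReal (u t ^ 2) + 2 * ENNReal.ofReal (u (t - s) ^ 2)) :=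
          lintegral_mono fun t => sq_diff_ofReal_le _ _
      _ = 2 * (∫⁻ t : ℝ, ENNReal.ofReal (u t ^ 2))
            + 2 * ∫⁻ t : ℝ, ENNReal.ofReal (u (t - s) ^ 2) := by
          rw [lintegral_add_left' (husq.const_mul 2), lintegral_const_mul' _ _ (by norm_num),
            lintegral_const_mul' _ _ (by norm_num)]
      _ = 4 * ∫⁻ t : ℝ, ENNReal.ofReal (u t ^ 2) := by
          rw [hshift, ← add_mul]; norm_num
      _ ≤ ENNReal.ofReal (4*s/τ) * ∫⁻ t : ℝ, ENNReal.ofReal (u t ^ 2) := by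
          refine mul_le_mul_left ?_ _
          have h4 : ((4:ℝ≥0∞)) = ENNReal.ofReal (4:ℝ) := by norm_num
          rw [h4]
          refine ENNReal.ofReal_le_ofReal ?_
          rw [le_div_iff₀ hτ]
          nlinarith
  · -- main case s < τ
    choose c hc using hpc
    set S : ℤ → Set ℝ := fun k => Ioo ((k : ℝ) * τ) (((k : ℝ) + 1) * τ) with hSdef
    have hSm : ∀ k, MeasurableSet (S k) := fun k => measurableSet_Ioo
    have hdisj : Pairwise (Function.onFun Disjoint S) := by
      intro k l hkl
      rw [Function.onFun, Set.disjoint_left]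
      rintro x ⟨hk1, hk2⟩ ⟨hl1, hl2⟩
      apply hkl
      have h1 : (l:ℝ) < (k:ℝ) + 1 := lt_of_mul_lt_mul_right (hl1.trans hk2) hτ.le
      have h2 : (k:ℝ) < (l:ℝ) + 1 := lt_of_mul_lt_mul_right (hk1.trans hl2) hτ.le
      have h1' : l < k + 1 := by exact_mod_cast h1
      have h2' : k < l + 1 := by exact_mod_cast h2
      omega
    have hcover : ∀ f : ℝ → ℝ≥0∞, ∫⁻ t : ℝ, f t = ∑' k : ℤ, ∫⁻ t in S k, f t := by
      intro f
      have hnull : volume (⋃ k, S k)ᶜ = 0 := by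
        refine measure_mono_null ?_ ((Set.countable_range (fun k : ℤ => (k:ℝ) * τ)).measure_zero _)
        intro x hx
        simp only [Set.mem_compl_iff, Set.mem_iUnion, not_exists] at hx
        by_contra hne
        simp only [Set.mem_range, not_exists] at hne
        set k := ⌊x / τ⌋ with hk
        have h1 : (k:ℝ) * τ ≤ x := (le_div_iff₀ hτ).mp (Int.floor_le _)
        have h2 : x < ((k:ℝ) + 1) * τ := by
          rw [← div_lt_iff₀ hτ]; exact Int.lt_floor_add_one _
        exact hx k ⟨lt_of_le_of_ne h1 (fun h => hne k h), h2⟩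
      have huniv : (⋃ k, S k) =ᵐ[volume] (Set.univ : Set ℝ) := ae_eq_univ.mpr hnull
      rw [← setLIntegral_univ f, ← Measure.restrict_congr_set huniv,
        lintegral_iUnion hSm hdisj f]
    have hU : ∀ k : ℤ, ∫⁻ t in S k, ENNReal.ofReal (u t ^ 2)
        = ENNReal.ofReal ((c k)^2) * ENNReal.ofReal τ := by
      intro k
      rw [setLIntegral_congr_fun (hSm k)
        (fun t ht => by rw [hc k t ht]), setLIntegral_const, Real.volume_Ioo]
      congr 1
      ring
    have hD : ∀ k : ℤ, ∫⁻ t in S k, ENNReal.ofReal ((u t - u (t - s))^2)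
        ≤ (2 * ENNReal.ofReal ((c k)^2) + 2 * ENNReal.ofReal ((c (k-1))^2))
            * ENNReal.ofReal s := by
      intro k
      have hks : (k:ℝ)*τ + s < ((k:ℝ)+1)*τ := by nlinarith
      have hsplit : S k ⊆ Ioc ((k:ℝ)*τ) ((k:ℝ)*τ + s) ∪ Ioo ((k:ℝ)*τ + s) (((k:ℝ)+1)*τ) := by
        intro x hx
        rcases le_or_gt x ((k:ℝ)*τ + s) with h | h
        · exact Or.inl ⟨hx.1, h⟩
        · exact Or.inr ⟨h, hx.2⟩
      have hO : ∫⁻ t in Ioo ((k:ℝ)*τ + s) (((k:ℝ)+1)*τ),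
          ENNReal.ofReal ((u t - u (t - s))^2) = 0 := by
        rw [setLIntegral_congr_fun measurableSet_Ioo
          (fun t ht => ?_), lintegral_zero]
        have ht1 : (k:ℝ)*τ < t := lt_trans (by nlinarith) ht.1
        have h1 : u t = c k := hc k t ⟨ht1, ht.2⟩
        have h2 : u (t - s) = c k := hc k (t - s) ⟨by linarith [ht.1], by linarith [ht.2]⟩
        rw [h1, h2, sub_self]
        norm_num
      have hI : ∫⁻ t in Ioc ((k:ℝ)*τ) ((k:ℝ)*τ + s),
          ENNReal.ofReal ((u t - u (t - s))^2)
          ≤ (2 * ENNReal.ofReal ((c k)^2) + 2 * ENNReal.ofReal ((c (k-1))^2))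
              * ENNReal.ofReal s := by
        rw [← Measure.restrict_congr_set Ioo_ae_eq_Ioc]
        have hb : ∀ t ∈ Ioo ((k:ℝ)*τ) ((k:ℝ)*τ + s),
            ENNReal.ofReal ((u t - u (t - s))^2)
            ≤ 2 * ENNReal.ofReal ((c k)^2) + 2 * ENNReal.ofReal ((c (k-1))^2) := by
          intro t ht
          have h1 : u t = c k := hc k t ⟨ht.1, lt_trans ht.2 hks⟩
          have h2 : u (t - s) = c (k-1) := by
            refine hc (k-1) (t - s) ?_
            push_cast
            constructor
            · nlinarith [ht.1]
            · nlinarith [ht.2]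
          rw [h1, h2]
          exact sq_diff_ofReal_le _ _
        calc ∫⁻ t in Ioo ((k:ℝ)*τ) ((k:ℝ)*τ + s), ENNReal.ofReal ((u t - u (t - s))^2)
            ≤ ∫⁻ _ in Ioo ((k:ℝ)*τ) ((k:ℝ)*τ + s),
                (2 * ENNReal.ofReal ((c k)^2) + 2 * ENNReal.ofReal ((c (k-1))^2)) :=
              setLIntegral_mono measurable_const hb
          _ = (2 * ENNReal.ofReal ((c k)^2) + 2 * ENNReal.ofReal ((c (k-1))^2))
                * ENNReal.ofReal s := by
              rw [setLIntegral_const, Real.volume_Ioo]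
              congr 1
              ring
      calc ∫⁻ t in S k, ENNReal.ofReal ((u t - u (t - s))^2)
          ≤ ∫⁻ t in Ioc ((k:ℝ)*τ) ((k:ℝ)*τ + s) ∪ Ioo ((k:ℝ)*τ + s) (((k:ℝ)+1)*τ),
              ENNReal.ofReal ((u t - u (t - s))^2) := lintegral_mono_set hsplit
        _ ≤ (∫⁻ t in Ioc ((k:ℝ)*τ) ((k:ℝ)*τ + s), ENNReal.ofReal ((u t - u (t - s))^2))
              + ∫⁻ t in Ioo ((k:ℝ)*τ + s) (((k:ℝ)+1)*τ),
                ENNReal.ofReal ((u t - u (t - s))^2) := lintegral_union_le _ _ _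
        _ ≤ (2 * ENNReal.ofReal ((c k)^2) + 2 * ENNReal.ofReal ((c (k-1))^2))
                * ENNReal.ofReal s + 0 := add_le_add hI hO.le
        _ = _ := add_zero _
    -- assemble
    set A : ℝ≥0∞ := ∑' k : ℤ, ENNReal.ofReal ((c k)^2) with hA
    have hshiftsum : ∑' k : ℤ, ENNReal.ofReal ((c (k-1))^2) = A := by
      rw [hA]
      exact ((Equiv.subRight (1:ℤ)).tsum_eq (fun k => ENNReal.ofReal ((c k)^2)))
    rw [hcover (fun t => ENNReal.ofReal ((u t - u (t - s))^2)),
      hcover (fun t => ENNReal.ofReal (u t ^ 2))]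
    calc ∑' k : ℤ, ∫⁻ t in S k, ENNReal.ofReal ((u t - u (t - s))^2)
        ≤ ∑' k : ℤ, (2 * ENNReal.ofReal ((c k)^2) + 2 * ENNReal.ofReal ((c (k-1))^2))
            * ENNReal.ofReal s := ENNReal.tsum_le_tsum hD
      _ = A * ENNReal.ofReal (4*s) := by
          rw [ENNReal.tsum_mul_right, ENNReal.tsum_add, ENNReal.tsum_mul_left,
            ENNReal.tsum_mul_left, hshiftsum, ← hA]
          have h4 : ENNReal.ofReal (4*s) = 4 * ENNReal.ofReal s := by
            rw [ENNReal.ofReal_mul (by norm_num)]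
            norm_num
          rw [h4, ← add_mul, ← mul_assoc]
          ring_nf
      _ = ENNReal.ofReal (4*s/τ) * ∑' k : ℤ, ENNReal.ofReal ((c k)^2) * ENNReal.ofReal τ := by
          rw [ENNReal.tsum_mul_right, ← hA]
          have hkey : ENNReal.ofReal (4*s/τ) * ENNReal.ofReal τ = ENNReal.ofReal (4*s) := by
            rw [← ENNReal.ofReal_mul (by positivity)]
            congr 1
            field_simp
          calc A * ENNReal.ofReal (4*s)
              = A * (ENNReal.ofReal (4*s/τ) * ENNReal.ofReal τ) := by rw [hkey]
            _ = ENNReal.ofReal (4*s/τ) * (A * ENNReal.ofReal τ) := by ring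
      _ = ENNReal.ofReal (4*s/τ) * ∑' k : ℤ, ∫⁻ t in S k, ENNReal.ofReal (u t ^ 2) := by
          congr 1
          exact (tsum_congr (fun k => (hU k).symm))



section lemc
variable {α β : ℝ} (hα : 0 < α) (hβ : 0 < β)


include hα hβ

lemma lintegral_ofReal_GkerB : ∫⁻ s, ENNReal.ofReal (GkerB α β s) = 1 := by
  rw [← ofReal_integral_eq_lintegral_ofReal (integrable_GkerB hα hβ)
    (ae_of_all _ (GkerB_nonneg hα hβ)), integral_GkerB hα hβ, ENNReal.ofReal_one]

lemma lemC {u : ℝ → ℝ} (hu : AEMeasurable u volume) (t : ℝ) :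
    ENNReal.ofReal ((u t - conv (GkerB α β) u t)^2)
      ≤ ∫⁻ s : ℝ, ENNReal.ofReal (GkerB α β s)
          * ENNReal.ofReal ((u t - u (t - s))^2) := by
  set g := GkerB α β with hg
  set J := ∫⁻ s : ℝ, ENNReal.ofReal (g s) * ENNReal.ofReal ((u t - u (t - s))^2) with hJ
  by_cases hJtop : J = ⊤
  · exact hJtop ▸ le_top
  -- J is finite
  have hgm : Measurable g := measurable_GkerB
  have hgnn : ∀ s, 0 ≤ g s := GkerB_nonneg hα hβ
  have huts : AEMeasurable (fun s => u (t - s)) volume :=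
    hu.comp_quasiMeasurePreserving
      (Measure.measurePreserving_sub_left volume t).quasiMeasurePreserving
  have hΔ : AEMeasurable (fun s => u t - u (t - s)) volume := aemeasurable_const.sub huts
  -- Cauchy-Schwarz
  have habs : ∀ s : ℝ, ENNReal.ofReal ((u t - u (t - s))^2)
      = (ENNReal.ofReal |u t - u (t - s)|) ^ (2:ℝ) := by
    intro s
    rw [← sq_abs, ← Real.rpow_natCast |u t - u (t - s)| 2,
      ← ENNReal.ofReal_rpow_of_nonneg (abs_nonneg _) (by positivity)]
    norm_num
  have hCS : (∫⁻ s : ℝ, ENNReal.ofReal (g s) * ENNReal.ofReal |u t - u (t - s)|)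
      ≤ J ^ (1/2 : ℝ) := by
    have hconj : Real.HolderConjugate 2 2 := ⟨by norm_num, by norm_num, by norm_num⟩
    have hf1 : AEMeasurable (fun s => (ENNReal.ofReal (g s)) ^ (1/2:ℝ)) volume :=
      (hgm.ennreal_ofReal.pow_const _).aemeasurable
    have hf2 : AEMeasurable
        (fun s => (ENNReal.ofReal (g s) * ENNReal.ofReal ((u t - u (t - s))^2)) ^ (1/2:ℝ))
        volume := by
      exact ((hgm.ennreal_ofReal.aemeasurable.mul
        ((hΔ.pow_const 2).ennreal_ofReal)).pow_const _)
    have hkey := ENNReal.lintegral_mul_le_Lp_mul_Lq volume hconj hf1 hf2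
    have heq1 : ∀ s : ℝ, (ENNReal.ofReal (g s)) ^ (1/2:ℝ)
        * (ENNReal.ofReal (g s) * ENNReal.ofReal ((u t - u (t - s))^2)) ^ (1/2:ℝ)
        = ENNReal.ofReal (g s) * ENNReal.ofReal |u t - u (t - s)| := by
      intro s
      rw [habs s, ENNReal.mul_rpow_of_nonneg _ _ (by norm_num : (0:ℝ) ≤ 1/2),
        ← mul_assoc, ← ENNReal.rpow_add_of_nonneg _ _ (by norm_num) (by norm_num),
        ← ENNReal.rpow_mul]
      norm_num
    have heq2 : ∀ s : ℝ, ((ENNReal.ofReal (g s)) ^ (1/2:ℝ)) ^ (2:ℝ)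
        = ENNReal.ofReal (g s) := by
      intro s
      rw [← ENNReal.rpow_mul]
      norm_num
    have heq3 : ∀ s : ℝ,
        ((ENNReal.ofReal (g s) * ENNReal.ofReal ((u t - u (t - s))^2)) ^ (1/2:ℝ)) ^ (2:ℝ)
        = ENNReal.ofReal (g s) * ENNReal.ofReal ((u t - u (t - s))^2) := by
      intro s
      rw [← ENNReal.rpow_mul]
      norm_num
    simp only [Pi.mul_apply] at hkey
    rw [lintegral_congr heq1, lintegral_congr heq2, lintegral_congr heq3] at hkey
    rw [lintegral_ofReal_GkerB hα hβ, ENNReal.one_rpow, one_mul] at hkey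
    exact hkey
  -- the integrand is integrable
  set h : ℝ → ℝ := fun s => g s * (u t - u (t - s)) with hh
  have hofabs : ∀ s : ℝ, ENNReal.ofReal |h s|
      = ENNReal.ofReal (g s) * ENNReal.ofReal |u t - u (t - s)| := by
    intro s
    rw [hh, abs_mul, abs_of_nonneg (hgnn s), ENNReal.ofReal_mul (hgnn s)]
  have hfin : (∫⁻ s : ℝ, ENNReal.ofReal |h s|) < ⊤ := by
    rw [lintegral_congr hofabs]
    exact lt_of_le_of_lt hCS (ENNReal.rpow_lt_top_of_nonneg (by norm_num) hJtop)
  have hinth : Integrable h := by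
    refine ⟨(hgm.aemeasurable.mul hΔ).aestronglyMeasurable, ?_⟩
    rw [hasFiniteIntegral_def]
    have : ∀ s : ℝ, ‖h s‖ₑ = ENNReal.ofReal |h s| := fun s =>
      Real.enorm_eq_ofReal_abs _
    rw [lintegral_congr this]
    exact hfin
  have hint1 : Integrable (fun s => g s * u t) := (integrable_GkerB hα hβ).mul_const _
  have hint2 : Integrable (fun s => g s * u (t - s)) := by
    have heq : (fun s => g s * u t - h s) = fun s => g s * u (t - s) := by
      funext s
      rw [hh]
      ring
    rw [← heq]
    exact hint1.sub hinth
  -- identify u t - conv g u t with ∫ h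
  have hconv : u t - conv g u t = ∫ s, h s := by
    have e1 : conv g u t = ∫ s, g s * u (t - s) := rfl
    have e2 : ∫ s, g s * u (t - s) = (∫ s, g s * u t) - ∫ s, h s := by
      rw [← integral_sub hint1 hinth]
      congr 1
      funext s
      rw [hh]
      ring
    have e3 : (∫ s, g s * u t) = u t := by
      rw [integral_mul_const, integral_GkerB hα hβ, one_mul]
    rw [e1, e2, e3]
    ring
  -- conclude
  calc ENNReal.ofReal ((u t - conv g u t)^2)
      = (ENNReal.ofReal |∫ s, h s|) ^ (2:ℕ) := by
        rw [hconv, ← sq_abs, ENNReal.ofReal_pow (abs_nonneg _)]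
    _ ≤ (∫⁻ s : ℝ, ENNReal.ofReal |h s|) ^ (2:ℕ) := by
        refine pow_le_pow_left' ?_ 2
        calc ENNReal.ofReal |∫ s, h s| ≤ ENNReal.ofReal (∫ s, |h s|) :=
              ENNReal.ofReal_le_ofReal (by
                simpa [Real.norm_eq_abs] using
                  MeasureTheory.norm_integral_le_integral_norm (μ := volume) h)
          _ = ∫⁻ s : ℝ, ENNReal.ofReal |h s| :=
              ofReal_integral_eq_lintegral_ofReal hinth.abs (ae_of_all _ fun s => abs_nonneg _)
    _ ≤ (J ^ (1/2:ℝ)) ^ (2:ℕ) := by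
        refine pow_le_pow_left' ?_ 2
        rw [lintegral_congr hofabs]
        exact hCS
    _ = J := by
        rw [← ENNReal.rpow_natCast (J ^ (1/2:ℝ)) 2, ← ENNReal.rpow_mul]
        norm_num

end lemc

/-- **Convolution with `G_α` is close to the identity on piecewise constants when
`α ≪ τ`:** for each `β > 0` and `ε > 0` there is `C > 0` such that for all `τ > 0`,
all `0 < α ≤ τ/C`, and all `τ`-piecewise constant `u ∈ L²(ℝ)`,
`‖u − G_α ∗ u‖_{L²} ≤ ε ‖u‖_{L²}` (stated in squared form). -/
theorem conv_Gker_close_to_identity :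
    ∀ β : ℝ, 0 < β → ∀ ε : ℝ, 0 < ε → ∃ C > (0 : ℝ), ∀ τ : ℝ, 0 < τ →
      ∀ α : ℝ, 0 < α → α ≤ τ / C →
      ∀ u : ℝ → ℝ, MemLp u 2 volume →
        (∀ k : ℤ, ∃ c : ℝ, ∀ t ∈ Set.Ioo ((k : ℝ) * τ) (((k : ℝ) + 1) * τ), u t = c) →
        (∫⁻ x : ℝ, ENNReal.ofReal ((u x - conv (GkerB α β) u x) ^ 2))
          ≤ ENNReal.ofReal (ε ^ 2) * ∫⁻ x : ℝ, ENNReal.ofReal ((u x) ^ 2) := by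
  intro β hβ ε hε
  refine ⟨4 / (β * ε ^ 2), by positivity, ?_⟩
  intro τ hτ α hα hαle u hmem hpc
  have hu : AEMeasurable u volume := hmem.aestronglyMeasurable.aemeasurable
  set U := ∫⁻ x : ℝ, ENNReal.ofReal ((u x) ^ 2) with hU
  by_cases hUtop : U = ⊤
  · rw [hUtop, ENNReal.mul_top (by simp [ENNReal.ofReal_eq_zero]; positivity)]
    exact le_top
  set g := GkerB α β with hg
  have hgm : Measurable g := measurable_GkerB
  have hgnn : ∀ s, 0 ≤ g s := GkerB_nonneg hα hβ
  -- pointwise bound + Tonelli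
  have hF : AEMeasurable
      (Function.uncurry fun t s : ℝ =>
        ENNReal.ofReal (g s) * ENNReal.ofReal ((u t - u (t - s)) ^ 2))
      (volume.prod volume) := by
    have h1 : AEMeasurable (fun p : ℝ × ℝ => u p.1) (volume.prod volume) :=
      hu.comp_quasiMeasurePreserving Measure.quasiMeasurePreserving_fst
    have h2 : AEMeasurable (fun p : ℝ × ℝ => u (p.1 - p.2)) (volume.prod volume) :=
      hu.comp_quasiMeasurePreserving
        (quasiMeasurePreserving_sub_of_right_invariant volume volume)
    have h3 : AEMeasurable (fun p : ℝ × ℝ => ENNReal.ofReal (g p.2))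
        (volume.prod volume) :=
      (hgm.comp measurable_snd).ennreal_ofReal.aemeasurable
    exact h3.mul (((h1.sub h2).pow_const 2).ennreal_ofReal)
  calc ∫⁻ x : ℝ, ENNReal.ofReal ((u x - conv g u x) ^ 2)
      ≤ ∫⁻ t : ℝ, ∫⁻ s : ℝ, ENNReal.ofReal (g s) * ENNReal.ofReal ((u t - u (t - s)) ^ 2) :=
        lintegral_mono fun t => lemC hα hβ hu t
    _ = ∫⁻ s : ℝ, ∫⁻ t : ℝ, ENNReal.ofReal (g s) * ENNReal.ofReal ((u t - u (t - s)) ^ 2) :=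
        lintegral_lintegral_swap hF
    _ = ∫⁻ s : ℝ, ENNReal.ofReal (g s)
          * ∫⁻ t : ℝ, ENNReal.ofReal ((u t - u (t - s)) ^ 2) := by
        refine lintegral_congr fun s => ?_
        exact lintegral_const_mul' _ _ ENNReal.ofReal_ne_top
    _ ≤ ∫⁻ s : ℝ, ENNReal.ofReal (g s * (4 * s / τ)) * U := by
        refine lintegral_mono fun s => ?_
        rcases lt_trichotomy s 0 with hs | hs | hs
        · have : g s = 0 := by
            rw [hg]
            unfold GkerB
            rw [if_neg (not_le.mpr hs)]
          rw [this]
          simp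
        · subst hs
          have hzero : ∫⁻ t : ℝ, ENNReal.ofReal ((u t - u (t - 0)) ^ 2) = 0 := by
            have : ∀ t : ℝ, ENNReal.ofReal ((u t - u (t - 0)) ^ 2) = 0 := by
              intro t
              rw [sub_zero, sub_self]
              simp
            rw [lintegral_congr this, lintegral_zero]
          rw [hzero, mul_zero]
          exact zero_le
        · have hB := lemB hτ hs hu hpc
          calc ENNReal.ofReal (g s) * ∫⁻ t : ℝ, ENNReal.ofReal ((u t - u (t - s)) ^ 2)
              ≤ ENNReal.ofReal (g s) * (ENNReal.ofReal (4 * s / τ) * U) :=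
                mul_le_mul_right hB _
            _ = ENNReal.ofReal (g s * (4 * s / τ)) * U := by
                rw [← mul_assoc, ← ENNReal.ofReal_mul (hgnn s)]
    _ = ENNReal.ofReal (∫ s : ℝ, g s * (4 * s / τ)) * U := by
        rw [lintegral_mul_const' _ _ hUtop]
        congr 1
        rw [← ofReal_integral_eq_lintegral_ofReal]
        · have heq : (fun s : ℝ => g s * (4 * s / τ)) = fun s => (4 / τ) * (g s * s) := by
            funext s
            ring
          rw [heq]
          exact (integrable_GkerB_mul hα hβ).const_mul _
        · refine ae_of_all _ fun s => ?_
          show (0:ℝ) ≤ g s * (4 * s / τ)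
          rcases le_or_gt 0 s with h | h
          · have := hgnn s
            positivity
          · have hz : g s = 0 := by
              rw [hg]; unfold GkerB; rw [if_neg (not_le.mpr h)]
            rw [hz, zero_mul]
    _ ≤ ENNReal.ofReal (ε ^ 2) * U := by
        refine mul_le_mul_left (ENNReal.ofReal_le_ofReal ?_) _
        have heq : (fun s : ℝ => g s * (4 * s / τ)) = fun s => (4 / τ) * (g s * s) := by
          funext s
          ring
        rw [heq, integral_const_mul, integral_GkerB_mul hα hβ]
        have hpos : (0:ℝ) < β * ε ^ 2 := by positivity
        have h4 : α * (4 / (β * ε ^ 2)) ≤ τ := (le_div_iff₀ (by positivity)).mp hαle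
        have hc : 4 / (β * ε ^ 2) * (β * ε ^ 2) = 4 := div_mul_cancel₀ _ (by positivity)
        rw [div_mul_div_comm, div_le_iff₀ (by positivity)]
        nlinarith [mul_le_mul_of_nonneg_right h4 hpos.le, hc]
end

section
/- For every β > 0 and T > 0 there exists a constant C > 0 such that for every α > 0 the boundary-layer function t ↦ exp(−βt/α) has Slobodetski H^{1/2}(0,T) seminorm bounded by C: ∫₀ᵀ ∫₀ᵀ |exp(−βx/α) − exp(−βy/α)|² / |x − y|² dx dy ≤ C. In particular the H^{1/2}(0,T) norms of the functions exp(−β·/α) are uniformly bounded as α → 0. -/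
open MeasureTheory

open Set Real
open scoped ENNReal


lemma lint_Ioi_inv_sq {c : ℝ} (hc : 0 < c) :
    ∫⁻ u in Ioi c, ENNReal.ofReal ((u ^ 2)⁻¹) = ENNReal.ofReal c⁻¹ := by
  have hcongr : ∀ᵐ u ∂(volume.restrict (Ioi c)),
      ENNReal.ofReal ((u ^ 2)⁻¹) = ENNReal.ofReal (u ^ (-2 : ℝ)) := by
    filter_upwards [ae_restrict_mem measurableSet_Ioi] with u hu
    have hu0 : 0 < u := hc.trans hu
    rw [Real.rpow_neg hu0.le]
    norm_num [Real.rpow_natCast]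
  rw [lintegral_congr_ae hcongr,
    ← ofReal_integral_eq_lintegral_ofReal (integrableOn_Ioi_rpow_of_lt (by norm_num) hc)
      (by filter_upwards [ae_restrict_mem measurableSet_Ioi] with u hu using
        Real.rpow_nonneg (hc.trans hu).le _),
    integral_Ioi_rpow_of_lt (by norm_num) hc]
  norm_num [Real.rpow_neg_one]

lemma lint_shift (f : ℝ → ℝ≥0∞) (x c : ℝ) :
    ∫⁻ y in Ioi c, f (y - x) = ∫⁻ u in Ioi (c - x), f u := by
  have h := (measurePreserving_add_right (volume : Measure ℝ) x).setLIntegral_comp_preimage_emb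
      (measurableEmbedding_addRight x) (fun y => f (y - x)) (Ioi c)
  simp only [add_sub_cancel_right, preimage_add_const_Ioi] at h
  exact h.symm

lemma lint_reflect (f : ℝ → ℝ≥0∞) (x c : ℝ) :
    ∫⁻ y in Iio c, f (x - y) = ∫⁻ u in Ioi (x - c), f u := by
  have h := (Measure.measurePreserving_sub_left (volume : Measure ℝ) x).setLIntegral_comp_preimage_emb
      (MeasurableEquiv.subLeft x).measurableEmbedding f (Ioi (x - c))
  simp only [preimage_const_sub_Ioi, sub_sub_cancel] at h
  exact h

noncomputable def mfun (a x y : ℝ) : ℝ := if |x - y| ≤ a⁻¹ then a ^ 2 else ((x - y) ^ 2)⁻¹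

noncomputable def Gfun (a x y : ℝ) : ℝ≥0∞ :=
  ENNReal.ofReal (Real.exp (-(2 * a * x)) * mfun a x y)

lemma mfun_nonneg (a x y : ℝ) : 0 ≤ mfun a x y := by
  unfold mfun; split <;> positivity

lemma mfun_symm (a x y : ℝ) : mfun a x y = mfun a y x := by
  unfold mfun
  rw [abs_sub_comm, show ((x - y):ℝ) ^ 2 = (y - x) ^ 2 from by ring]

lemma mfun_meas (a : ℝ) : Measurable (fun p : ℝ × ℝ => mfun a p.1 p.2) := by
  unfold mfun
  apply Measurable.ite
  · exact measurableSet_le (measurable_fst.sub measurable_snd).abs measurable_const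
  · exact measurable_const
  · exact ((measurable_fst.sub measurable_snd).pow_const 2).inv

lemma Gfun_meas (a : ℝ) : Measurable (fun p : ℝ × ℝ => Gfun a p.1 p.2) := by
  unfold Gfun
  apply ENNReal.measurable_ofReal.comp
  exact ((measurable_fst.const_mul (2 * a)).neg.exp.mul (mfun_meas a))

lemma m_integral {a : ℝ} (ha : 0 < a) (T x : ℝ) :
    ∫⁻ y in Ioo (0:ℝ) T,
      ENNReal.ofReal (mfun a x y)
      ≤ ENNReal.ofReal (4 * a) := by
  unfold mfun
  set f : ℝ → ℝ≥0∞ :=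
    fun y => ENNReal.ofReal (if |x - y| ≤ a⁻¹ then a ^ 2 else ((x - y) ^ 2)⁻¹) with hf
  have ha' : 0 < a⁻¹ := inv_pos.mpr ha
  calc ∫⁻ y in Ioo (0:ℝ) T, f y ≤ ∫⁻ y, f y := setLIntegral_le_lintegral _ _
    _ = (∫⁻ y in Icc (x - a⁻¹) (x + a⁻¹), f y) + ∫⁻ y in (Icc (x - a⁻¹) (x + a⁻¹))ᶜ, f y := by
        exact (lintegral_add_compl f (measurableSet_Icc : MeasurableSet (Icc (x - a⁻¹) (x + a⁻¹)))).symm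
    _ ≤ ENNReal.ofReal (2 * a) + (ENNReal.ofReal a + ENNReal.ofReal a) := by
        gcongr
        · -- on Icc the integrand is a²
          have : ∀ y ∈ Icc (x - a⁻¹) (x + a⁻¹), f y = ENNReal.ofReal (a ^ 2) := by
            intro y hy
            rw [hf]
            have : |x - y| ≤ a⁻¹ := by
              rw [abs_le]
              constructor <;> [linarith [hy.2]; linarith [hy.1]]
            simp [this]
          rw [setLIntegral_congr_fun measurableSet_Icc this,
            lintegral_const, Measure.restrict_apply_univ, Real.volume_Icc,
            ← ENNReal.ofReal_mul (by positivity)]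
          apply ENNReal.ofReal_le_ofReal
          rw [show x + a⁻¹ - (x - a⁻¹) = 2 * a⁻¹ by ring]
          rw [show a ^ 2 * (2 * a⁻¹) = 2 * (a * (a * a⁻¹)) by ring, mul_inv_cancel₀ ha.ne']
          simp [le_refl]
        · -- complement
          have hc : (Icc (x - a⁻¹) (x + a⁻¹))ᶜ = Iio (x - a⁻¹) ∪ Ioi (x + a⁻¹) := by
            ext y
            simp only [Set.mem_compl_iff, Set.mem_Icc, not_and_or, not_le, Set.mem_union,
              Set.mem_Iio, Set.mem_Ioi]
          have hfc : ∀ y, y ∈ (Icc (x - a⁻¹) (x + a⁻¹))ᶜ →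
              f y = ENNReal.ofReal (((x - y) ^ 2)⁻¹) := by
            intro y hy
            rw [Set.mem_compl_iff, Set.mem_Icc, not_and_or, not_le, not_le] at hy
            have : ¬ |x - y| ≤ a⁻¹ := by
              rw [not_le, lt_abs]
              rcases hy with h | h
              · left; linarith
              · right; linarith
            simp [hf, this]
          rw [setLIntegral_congr_fun (measurableSet_Icc).compl hfc, hc]
          refine le_trans (lintegral_union_le _ _ _) ?_
          gcongr
          · -- Iio piece
            calc ∫⁻ y in Iio (x - a⁻¹), ENNReal.ofReal (((x - y) ^ 2)⁻¹)
                = ∫⁻ u in Ioi (x - (x - a⁻¹)), ENNReal.ofReal ((u ^ 2)⁻¹) :=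
                  lint_reflect (fun u => ENNReal.ofReal ((u ^ 2)⁻¹)) x (x - a⁻¹)
              _ = ENNReal.ofReal a := by
                  rw [show x - (x - a⁻¹) = a⁻¹ by ring, lint_Ioi_inv_sq ha', inv_inv]
              _ ≤ ENNReal.ofReal a := le_rfl
          · -- Ioi piece
            calc ∫⁻ y in Ioi (x + a⁻¹), ENNReal.ofReal (((x - y) ^ 2)⁻¹)
                = ∫⁻ y in Ioi (x + a⁻¹), ENNReal.ofReal (((y - x) ^ 2)⁻¹) := by
                  refine lintegral_congr fun y => ?_
                  rw [show (x - y) ^ 2 = (y - x) ^ 2 by ring]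
              _ = ∫⁻ u in Ioi (x + a⁻¹ - x), ENNReal.ofReal ((u ^ 2)⁻¹) :=
                  lint_shift (fun u => ENNReal.ofReal ((u ^ 2)⁻¹)) x (x + a⁻¹)
              _ = ENNReal.ofReal a := by
                  rw [show x + a⁻¹ - x = a⁻¹ by ring, lint_Ioi_inv_sq ha', inv_inv]
              _ ≤ ENNReal.ofReal a := le_rfl
    _ ≤ ENNReal.ofReal (4 * a) := by
        rw [← ENNReal.ofReal_add (by positivity) (by positivity),
          ← ENNReal.ofReal_add (by positivity) (by positivity)]
        apply ENNReal.ofReal_le_ofReal; linarith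

lemma exp_lint {b : ℝ} (hb : 0 < b) (T : ℝ) :
    ∫⁻ x in Ioo (0:ℝ) T, ENNReal.ofReal (Real.exp (-(b * x))) ≤ ENNReal.ofReal b⁻¹ := by
  refine le_trans (lintegral_mono_set Ioo_subset_Ioi_self) ?_
  have hint : IntegrableOn (fun x => Real.exp (-(b * x))) (Ioi (0:ℝ)) := by
    simpa [neg_mul] using exp_neg_integrableOn_Ioi 0 hb
  rw [← ofReal_integral_eq_lintegral_ofReal hint (ae_of_all _ fun x => (Real.exp_pos _).le)]
  apply ENNReal.ofReal_le_ofReal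
  have hderiv : ∀ x ∈ Ici (0:ℝ),
      HasDerivAt (fun x => -b⁻¹ * Real.exp (-(b * x))) (Real.exp (-(b * x))) x := by
    intro x _
    have h1 : HasDerivAt (fun x : ℝ => -(b * x)) (-b) x := by
      simpa using (hasDerivAt_id x).const_mul (-b)
    have h2 := h1.exp.const_mul (-b⁻¹)
    convert h2 using 1
    · rfl
    · rfl
    · linear_combination (-Real.exp (-(b * x))) * inv_mul_cancel₀ hb.ne'
  have htend : Filter.Tendsto (fun x => -b⁻¹ * Real.exp (-(b * x)))
      Filter.atTop (nhds 0) := by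
    have h3 : Filter.Tendsto (fun x : ℝ => -(b * x)) Filter.atTop Filter.atBot := by
      apply Filter.tendsto_neg_atTop_atBot.comp
      exact Filter.Tendsto.const_mul_atTop hb Filter.tendsto_id
    have := (Real.tendsto_exp_atBot.comp h3).const_mul (-b⁻¹)
    simpa using this
  rw [integral_Ioi_of_hasDerivAt_of_tendsto' hderiv hint htend]
  simp

lemma pw_aux {a : ℝ} (ha : 0 < a) {x y : ℝ} (hxy : x ≤ y) :
    (Real.exp (-(a * x)) - Real.exp (-(a * y))) ^ 2 / |x - y| ^ 2
      ≤ (Real.exp (-(2 * a * x)) + Real.exp (-(2 * a * y))) *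
        (if |x - y| ≤ a⁻¹ then a ^ 2 else ((x - y) ^ 2)⁻¹) := by
  have hm0 : (0:ℝ) ≤ (if |x - y| ≤ a⁻¹ then a ^ 2 else ((x - y) ^ 2)⁻¹) := by
    split <;> positivity
  rcases eq_or_lt_of_le hxy with rfl | hlt
  · simp only [sub_self]
    rw [abs_zero]
    norm_num
    positivity
  set t := y - x with ht_def
  have ht : 0 < t := by simp only [ht_def]; linarith
  have habs : |x - y| = t := by rw [abs_sub_comm, abs_of_nonneg ht.le]
  have ht2 : (0:ℝ) < t ^ 2 := by positivity
  set s := Real.exp (-(a * t)) with hs_def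
  have hs1 : s ≤ 1 := by
    rw [hs_def, ← Real.exp_zero]
    apply Real.exp_le_exp.mpr
    nlinarith
  have hs0 : 0 < s := Real.exp_pos _
  have hsplit : Real.exp (-(a * y)) = Real.exp (-(a * x)) * s := by
    rw [hs_def, ← Real.exp_add]
    congr 1
    rw [ht_def]; ring
  have hE2 : Real.exp (-(a * x)) ^ 2 = Real.exp (-(2 * a * x)) := by
    rw [sq, ← Real.exp_add]; congr 1; ring
  have hkey : (Real.exp (-(a * x)) - Real.exp (-(a * y))) ^ 2
      = Real.exp (-(2 * a * x)) * (1 - s) ^ 2 := by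
    rw [hsplit, ← hE2]; ring
  have hcase : (1 - s) ^ 2 / t ^ 2
      ≤ (if |x - y| ≤ a⁻¹ then a ^ 2 else ((x - y) ^ 2)⁻¹) := by
    split_ifs with h
    · rw [habs] at h
      have hlin : 1 - s ≤ a * t := by
        have := Real.add_one_le_exp (-(a * t))
        rw [← hs_def] at this
        linarith
      rw [div_le_iff₀ ht2]
      nlinarith
    · have hxy2 : (x - y) ^ 2 = t ^ 2 := by rw [ht_def]; ring
      rw [hxy2, div_le_iff₀ ht2, inv_mul_cancel₀ ht2.ne']
      nlinarith
  calc (Real.exp (-(a * x)) - Real.exp (-(a * y))) ^ 2 / |x - y| ^ 2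
      = Real.exp (-(2 * a * x)) * ((1 - s) ^ 2 / t ^ 2) := by
        rw [hkey, habs]; ring
    _ ≤ Real.exp (-(2 * a * x)) * (if |x - y| ≤ a⁻¹ then a ^ 2 else ((x - y) ^ 2)⁻¹) := by
        apply mul_le_mul_of_nonneg_left hcase (Real.exp_pos _).le
    _ ≤ (Real.exp (-(2 * a * x)) + Real.exp (-(2 * a * y))) *
        (if |x - y| ≤ a⁻¹ then a ^ 2 else ((x - y) ^ 2)⁻¹) := by
        apply mul_le_mul_of_nonneg_right _ hm0
        linarith [Real.exp_pos (-(2 * a * y))]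

lemma pw {a : ℝ} (ha : 0 < a) (x y : ℝ) :
    (Real.exp (-(a * x)) - Real.exp (-(a * y))) ^ 2 / |x - y| ^ 2
      ≤ (Real.exp (-(2 * a * x)) + Real.exp (-(2 * a * y))) * mfun a x y := by
  unfold mfun
  rcases le_total x y with h | h
  · exact pw_aux ha h
  · have h0 := pw_aux ha h
    have e1 : |x - y| = |y - x| := abs_sub_comm _ _
    have e2 : ((x - y):ℝ) ^ 2 = (y - x) ^ 2 := by ring
    have e3 : (Real.exp (-(a * x)) - Real.exp (-(a * y))) ^ 2
        = (Real.exp (-(a * y)) - Real.exp (-(a * x))) ^ 2 := by ring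
    rw [e1, e2, e3, add_comm (Real.exp (-(2 * a * x)))]
    exact h0

lemma mfun_swap_meas (a : ℝ) : Measurable (fun p : ℝ × ℝ => mfun a p.2 p.1) := by
  unfold mfun
  apply Measurable.ite
  · exact measurableSet_le (measurable_snd.sub measurable_fst).abs measurable_const
  · exact measurable_const
  · exact ((measurable_snd.sub measurable_fst).pow_const 2).inv

lemma Gfun_swap_meas (a : ℝ) : Measurable (fun p : ℝ × ℝ => Gfun a p.2 p.1) := by
  unfold Gfun
  exact ENNReal.measurable_ofReal.comp
    ((measurable_snd.const_mul (2 * a)).neg.exp.mul (mfun_swap_meas a))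


/-- **Uniform `H^{1/2}(0,T)` bound for the boundary-layer exponentials:** for every
`β > 0` and `T > 0` there is `C > 0` such that for every `α > 0` the function
`t ↦ exp(−βt/α)` satisfies
`∫₀ᵀ ∫₀ᵀ |exp(−βx/α) − exp(−βy/α)|² / |x − y|² dx dy ≤ C`. -/
theorem boundary_layer_Hhalf_uniform :
    ∀ β T : ℝ, 0 < β → 0 < T → ∃ C > (0 : ℝ), ∀ α : ℝ, 0 < α →
      (∫⁻ x in Set.Ioo (0 : ℝ) T, ∫⁻ y in Set.Ioo (0 : ℝ) T,
          ENNReal.ofReal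
            ((Real.exp (-(β * x) / α) - Real.exp (-(β * y) / α)) ^ 2 / |x - y| ^ 2))
        ≤ ENNReal.ofReal C := by
  intro β T hβ hT
  refine ⟨4, by norm_num, ?_⟩
  intro α hα
  have ha : 0 < β / α := div_pos hβ hα
  set a : ℝ := β / α with ha_def
  have hexp : ∀ x : ℝ, -(β * x) / α = -(a * x) := by
    intro x; rw [ha_def]; field_simp
  set S : Set ℝ := Set.Ioo (0 : ℝ) T with hS
  -- Step 1: pointwise bound
  have step1 : (∫⁻ x in S, ∫⁻ y in S,
      ENNReal.ofReal
        ((Real.exp (-(β * x) / α) - Real.exp (-(β * y) / α)) ^ 2 / |x - y| ^ 2))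
      ≤ ∫⁻ x in S, ∫⁻ y in S, (Gfun a x y + Gfun a y x) := by
    refine lintegral_mono fun x => lintegral_mono fun y => ?_
    rw [hexp x, hexp y]
    refine le_trans (ENNReal.ofReal_le_ofReal (pw ha x y)) (le_of_eq ?_)
    have hsum : (Real.exp (-(2 * a * x)) + Real.exp (-(2 * a * y))) * mfun a x y
        = Real.exp (-(2 * a * x)) * mfun a x y + Real.exp (-(2 * a * y)) * mfun a y x := by
      rw [← mfun_symm a x y]; ring
    rw [hsum, ENNReal.ofReal_add (mul_nonneg (Real.exp_pos _).le (mfun_nonneg a x y))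
      (mul_nonneg (Real.exp_pos _).le (mfun_nonneg a y x))]
    rfl
  -- Step 2: split
  have step2 : (∫⁻ x in S, ∫⁻ y in S, (Gfun a x y + Gfun a y x))
      = (∫⁻ x in S, ∫⁻ y in S, Gfun a x y) + ∫⁻ x in S, ∫⁻ y in S, Gfun a y x := by
    have hinner : ∀ x, (∫⁻ y in S, (Gfun a x y + Gfun a y x))
        = (∫⁻ y in S, Gfun a x y) + ∫⁻ y in S, Gfun a y x := by
      intro x
      exact lintegral_add_left ((Gfun_meas a).comp measurable_prodMk_left) _
    rw [lintegral_congr hinner]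
    exact lintegral_add_left
      (Measurable.lintegral_prod_right (f := fun x y => Gfun a x y) (Gfun_meas a)) _
  -- Step 3
  have step3 : (∫⁻ x in S, ∫⁻ y in S, Gfun a x y) ≤ ENNReal.ofReal 2 := by
    have hinner : ∀ x : ℝ, (∫⁻ y in S, Gfun a x y)
        ≤ ENNReal.ofReal (Real.exp (-(2 * a * x))) * ENNReal.ofReal (4 * a) := by
      intro x
      have heq : ∀ y, Gfun a x y
          = ENNReal.ofReal (Real.exp (-(2 * a * x))) * ENNReal.ofReal (mfun a x y) := by
        intro y
        unfold Gfun
        exact ENNReal.ofReal_mul (Real.exp_pos _).le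
      rw [lintegral_congr heq,
        lintegral_const_mul _ (show Measurable fun y : ℝ => ENNReal.ofReal (mfun a x y) from
          ENNReal.measurable_ofReal.comp ((mfun_meas a).comp measurable_prodMk_left))]
      exact mul_le_mul_right (m_integral ha T x) _
    calc (∫⁻ x in S, ∫⁻ y in S, Gfun a x y)
        ≤ ∫⁻ x in S, ENNReal.ofReal (Real.exp (-(2 * a * x))) * ENNReal.ofReal (4 * a) :=
          lintegral_mono hinner
      _ = (∫⁻ x in S, ENNReal.ofReal (Real.exp (-(2 * a * x)))) * ENNReal.ofReal (4 * a) := by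
          rw [lintegral_mul_const]
          exact ENNReal.measurable_ofReal.comp ((measurable_id.const_mul (2 * a)).neg.exp)
      _ ≤ ENNReal.ofReal (2 * a)⁻¹ * ENNReal.ofReal (4 * a) :=
          mul_le_mul_left (exp_lint (by positivity) T) _
      _ ≤ ENNReal.ofReal 2 := by
          rw [← ENNReal.ofReal_mul (by positivity)]
          apply ENNReal.ofReal_le_ofReal
          rw [show ((2:ℝ) * a)⁻¹ * (4 * a) = 2 * (a * a⁻¹) by field_simp; ring,
            mul_inv_cancel₀ ha.ne']
          norm_num
  -- Step 4
  have step4 : (∫⁻ x in S, ∫⁻ y in S, Gfun a y x) ≤ ENNReal.ofReal 2 := by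
    rw [lintegral_lintegral_swap (Gfun_swap_meas a).aemeasurable]
    exact step3
  calc (∫⁻ x in S, ∫⁻ y in S,
      ENNReal.ofReal
        ((Real.exp (-(β * x) / α) - Real.exp (-(β * y) / α)) ^ 2 / |x - y| ^ 2))
      ≤ ∫⁻ x in S, ∫⁻ y in S, (Gfun a x y + Gfun a y x) := step1
    _ = (∫⁻ x in S, ∫⁻ y in S, Gfun a x y) + ∫⁻ x in S, ∫⁻ y in S, Gfun a y x := step2
    _ ≤ ENNReal.ofReal 2 + ENNReal.ofReal 2 := add_le_add step3 step4
    _ ≤ ENNReal.ofReal 4 := by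
        rw [← ENNReal.ofReal_add (by norm_num) (by norm_num)]
        norm_num
end
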